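/- arXiv:1812.06538 — 6 statements merged into one kernel-verified Lean document; each statement's English description precedes it below -/
import Mathlib

section
/- For positive integers k, d with d | k and nonzero t, the Harer–Zagier polynomial β_{k,d}(t) := Σ_{r=1}^{k-1} e^{2πir/d} t^{k - gcd(k,r)} satisfies β_{k,d}(t) = k·t^k·M(1/t; k/d, k) − 1, where M(t; n, k) := (1/k) Σ_{d'|k} c(n, k/d') t^{d'} and c(n,m) is the Ramanujan sum. -/
open Finset

/-- Ramanujan sum. -/
noncomputable def ramc (n k : ℕ) : ℂ :=
  ∑ m ∈ (Finset.Icc 1 k).filter (fun m => Nat.gcd m k = 1),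
    Complex.exp (2 * Real.pi * Complex.I * m * n / k)

/-- The `n`-necklace polynomial `M(t;n,k) = (1/k) Σ_{d|k} c(n,k/d) t^d`. -/
noncomputable def neck (t : ℂ) (n k : ℕ) : ℂ :=
  (1 / (k : ℂ)) * ∑ d ∈ k.divisors, ramc n (k / d) * t ^ d

/-- Harer–Zagier polynomial `β_{k,d}(t) = Σ_{r=1}^{k-1} e^{2πir/d} t^{k-gcd(k,r)}`. -/
noncomputable def hz (k d : ℕ) (t : ℂ) : ℂ :=
  ∑ r ∈ Finset.Icc 1 (k - 1),
    Complex.exp (2 * Real.pi * Complex.I * r / d) * t ^ (k - Nat.gcd k r)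

theorem stmt1 (k d : ℕ) (hk : 0 < k) (hd : d ∣ k) (t : ℂ) (ht : t ≠ 0) :
    hz k d t = (k : ℂ) * t ^ k * neck (1 / t) (k / d) k - 1 := by
  have hd0 : 0 < d := Nat.pos_of_dvd_of_pos hd hk
  have hkC : (k : ℂ) ≠ 0 := Nat.cast_ne_zero.mpr hk.ne'
  have hdC : (d : ℂ) ≠ 0 := Nat.cast_ne_zero.mpr hd0.ne'
  set f : ℕ → ℂ := fun r =>
    Complex.exp (2 * Real.pi * Complex.I * r / d) * t ^ (k - Nat.gcd k r) with hf
  -- the r = k term equals 1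
  have hfk : f k = 1 := by
    have h1 : ((k : ℂ)) = ((k / d : ℕ) : ℂ) * d := by
      rw [← Nat.cast_mul, Nat.div_mul_cancel hd]
    simp only [hf, Nat.gcd_self, Nat.sub_self, pow_zero, mul_one]
    rw [h1]
    rw [show 2 * (Real.pi : ℂ) * Complex.I * (((k / d : ℕ) : ℂ) * d) / d
        = ((k / d : ℕ) : ℂ) * (2 * Real.pi * Complex.I) by field_simp]
    exact_mod_cast Complex.exp_int_mul_two_pi_mul_I (k / d : ℕ)
  -- full sum over Icc 1 k
  have hsplit : ∑ r ∈ Finset.Icc 1 k, f r = hz k d t + 1 := by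
    have : Finset.Icc 1 k = insert k (Finset.Icc 1 (k - 1)) := by
      ext r
      simp only [Finset.mem_insert, Finset.mem_Icc]
      omega
    rw [this, Finset.sum_insert (by simp; omega), hfk, hz]
    ring
  -- fiberwise grouping
  have hmaps : ∀ r ∈ Finset.Icc 1 k, Nat.gcd k r ∈ k.divisors := by
    intro r hr
    exact Nat.mem_divisors.mpr ⟨Nat.gcd_dvd_left _ _, hk.ne'⟩
  have hgroup : ∑ r ∈ Finset.Icc 1 k, f r
      = ∑ g ∈ k.divisors, ramc (k / d) (k / g) * t ^ (k - g) := by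
    rw [← Finset.sum_fiberwise_of_maps_to hmaps f]
    refine Finset.sum_congr rfl ?_
    intro g hg
    obtain ⟨hgdvd, -⟩ := Nat.mem_divisors.mp hg
    have hg0 : 0 < g := Nat.pos_of_dvd_of_pos hgdvd hk
    have hgC : (g : ℂ) ≠ 0 := Nat.cast_ne_zero.mpr hg0.ne'
    have hkg0 : 0 < k / g := Nat.div_pos (Nat.le_of_dvd hk hgdvd) hg0
    have hkgC : ((k / g : ℕ) : ℂ) ≠ 0 := Nat.cast_ne_zero.mpr hkg0.ne'
    rw [ramc, Finset.sum_mul]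
    refine Finset.sum_nbij' (fun r => r / g) (fun s => g * s) ?_ ?_ ?_ ?_ ?_
    · intro r hr
      simp only [Finset.mem_filter, Finset.mem_Icc] at hr ⊢
      obtain ⟨⟨hr1, hrk⟩, hgcd⟩ := hr
      have hgr : g ∣ r := hgcd ▸ Nat.gcd_dvd_right k r
      refine ⟨⟨?_, Nat.div_le_div_right hrk⟩, ?_⟩
      · exact Nat.one_le_div_iff hg0 |>.mpr (Nat.le_of_dvd (by omega) hgr)
      · have := Nat.coprime_div_gcd_div_gcd (m := k) (n := r) (by rw [hgcd]; exact hg0)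
        rw [hgcd] at this
        exact Nat.Coprime.gcd_eq_one (Nat.Coprime.symm this)
    · intro s hs
      simp only [Finset.mem_filter, Finset.mem_Icc] at hs ⊢
      obtain ⟨⟨hs1, hsk⟩, hcop⟩ := hs
      have hks : k = g * (k / g) := (Nat.mul_div_cancel' hgdvd).symm
      refine ⟨⟨Nat.mul_pos hg0 hs1, ?_⟩, ?_⟩
      · calc g * s ≤ g * (k / g) := Nat.mul_le_mul_left g hsk
          _ = k := (Nat.mul_div_cancel' hgdvd)
      · conv_lhs => rw [hks]
        rw [Nat.gcd_mul_left]
        rw [Nat.gcd_comm]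
        rw [hcop, mul_one]
    · intro r hr
      simp only [Finset.mem_filter, Finset.mem_Icc] at hr
      have hgr : g ∣ r := hr.2 ▸ Nat.gcd_dvd_right k r
      exact Nat.mul_div_cancel' hgr
    · intro s hs
      exact Nat.mul_div_cancel_left s hg0
    · intro r hr
      simp only [Finset.mem_filter, Finset.mem_Icc] at hr
      have hgr : g ∣ r := hr.2 ▸ Nat.gcd_dvd_right k r
      rw [hf]
      simp only [hr.2]
      congr 2
      have hrg : (r : ℂ) = g * (r / g : ℕ) := by
        rw [← Nat.cast_mul, Nat.mul_div_cancel' hgr]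
      have hkd : ((k / d : ℕ) : ℂ) = (k : ℂ) / d := by
        rw [Nat.cast_div hd hdC]
      have hkg : ((k / g : ℕ) : ℂ) = (k : ℂ) / g := by
        rw [Nat.cast_div hgdvd hgC]
      rw [hrg, hkd, hkg]
      field_simp
  -- right-hand side computation
  have hrhs : (k : ℂ) * t ^ k * neck (1 / t) (k / d) k
      = ∑ g ∈ k.divisors, ramc (k / d) (k / g) * t ^ (k - g) := by
    rw [neck, Finset.mul_sum, Finset.mul_sum]
    refine Finset.sum_congr rfl ?_
    intro e he
    obtain ⟨hedvd, -⟩ := Nat.mem_divisors.mp he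
    have hek : e ≤ k := Nat.le_of_dvd hk hedvd
    have htk : t ^ k = t ^ (k - e) * t ^ e := by
      rw [← pow_add]; congr 1; omega
    rw [htk]
    rw [div_pow, one_pow]
    field_simp
  rw [hrhs, ← hgroup, hsplit]
  ring
end

section
/- For positive integers n, k, the n-necklace polynomial satisfies M(t;n,k) = Z^{χ_n}_{R(C_k)}(t,...,t), where χ_n is the irreducible character of the cyclic group C_k sending a fixed generator to e^{2πin/k}, R(C_k) is the regular permutation representation of C_k, and Z^χ is the generalized cycle index with all variables set to t. -/
open Finset

/-- Total number of cycles of a permutation (orbits of its iteration, fixed points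
counted as `1`-cycles). -/
noncomputable def totalCycles {α : Type*} (σ : Equiv.Perm α) : ℕ :=
  Set.ncard {S : Set α | ∃ x : α, S = Set.range fun z : ℤ => (σ ^ z) x}

open scoped Pointwise

lemma totalCycles_mulLeft {G : Type*} [CommGroup G] (g : G) :
    totalCycles (Equiv.mulLeft g) = (Subgroup.zpowers g).index := by
  set H := Subgroup.zpowers g with hH
  have hS : ∀ x : G, (Set.range fun z : ℤ => ((Equiv.mulLeft g) ^ z) x)
      = x • (H : Set G) := by
    intro x
    ext y
    simp only [Set.mem_range, Equiv.zpow_mulLeft, Equiv.coe_mulLeft, Set.mem_smul_set]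
    constructor
    · rintro ⟨z, rfl⟩
      exact ⟨g ^ z, ⟨z, rfl⟩, by simp [mul_comm, smul_eq_mul]⟩
    · rintro ⟨h, ⟨z, rfl⟩, rfl⟩
      exact ⟨z, by simp [mul_comm, smul_eq_mul]⟩
  have hset : {S : Set G | ∃ x : G, S = Set.range fun z : ℤ => ((Equiv.mulLeft g) ^ z) x}
      = Set.range (fun x : G => x • (H : Set G)) := by
    ext S
    simp only [Set.mem_setOf_eq, Set.mem_range, hS, eq_comm]
  have hlift : ∀ (a b : G), (QuotientGroup.leftRel H) a b →
      (fun x : G => x • (H : Set G)) a = (fun x : G => x • (H : Set G)) b := by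
    intro a b hab
    rw [QuotientGroup.leftRel_apply] at hab
    exact (leftCoset_eq_iff H).2 hab
  let ψ : G ⧸ H → Set G := Quotient.lift (fun x : G => x • (H : Set G)) hlift
  have hinj : Function.Injective ψ := by
    intro a b
    induction a using Quotient.ind
    induction b using Quotient.ind
    intro hab
    have h2 : _ = _ := hab
    simp only [ψ, Quotient.lift_mk] at h2
    exact Quotient.sound (QuotientGroup.leftRel_apply.2 ((leftCoset_eq_iff H).1 h2))
  have hrange : Set.range (fun x : G => x • (H : Set G)) = Set.range ψ := by
    ext S
    constructor
    · rintro ⟨x, rfl⟩; exact ⟨QuotientGroup.mk x, rfl⟩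
    · rintro ⟨q, rfl⟩
      induction q using Quotient.ind
      exact ⟨_, rfl⟩
  rw [totalCycles, hset, hrange, ← Nat.card_coe_set_eq, Nat.card_range_of_injective hinj]
  rfl

lemma totalCycles_zmod (k : ℕ) [NeZero k] (g : Multiplicative (ZMod k)) :
    totalCycles (Equiv.mulLeft g) = Nat.gcd (Multiplicative.toAdd g).val k := by
  have hk : k ≠ 0 := NeZero.ne k
  rw [totalCycles_mulLeft]
  have hcard : Nat.card (Multiplicative (ZMod k)) = k := by
    simp [Nat.card_eq_fintype_card, ZMod.card]
  have hord : orderOf g = k / Nat.gcd k (Multiplicative.toAdd g).val := by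
    have h1 : g = Multiplicative.ofAdd (((Multiplicative.toAdd g).val : ℕ) : ZMod k) := by
      simp [ZMod.natCast_rightInverse (Multiplicative.toAdd g)]
    conv_lhs => rw [h1]
    rw [orderOf_ofAdd_eq_addOrderOf, ZMod.addOrderOf_coe _ hk]
  have hmul := Subgroup.card_mul_index (Subgroup.zpowers g)
  rw [Nat.card_zpowers, hcard, hord] at hmul
  have hgcddvd : Nat.gcd k (Multiplicative.toAdd g).val ∣ k := Nat.gcd_dvd_left _ _
  have hpos : 0 < k / Nat.gcd k (Multiplicative.toAdd g).val := by
    apply Nat.div_pos (Nat.le_of_dvd (Nat.pos_of_ne_zero hk) hgcddvd)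
    exact Nat.pos_of_ne_zero fun h => hk (Nat.eq_zero_of_gcd_eq_zero_left h)
  have hidx : k / (k / Nat.gcd k (Multiplicative.toAdd g).val) = (Subgroup.zpowers g).index :=
    Nat.div_eq_of_eq_mul_left hpos
      (by calc k = _ := hmul.symm
            _ = _ := Nat.mul_comm _ _)
  rw [← hidx]
  rw [Nat.div_div_self hgcddvd hk, Nat.gcd_comm]

lemma ramc_range (n m : ℕ) :
    ramc n m = ∑ a ∈ (Finset.range m).filter (fun a => Nat.gcd a m = 1),
      Complex.exp (2 * Real.pi * Complex.I * a * n / m) := by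
  rcases Nat.eq_zero_or_pos m with rfl | hm
  · simp [ramc]
  rcases eq_or_lt_of_le (show 1 ≤ m from hm) with h1 | h2
  · -- m = 1
    obtain rfl : m = 1 := h1.symm
    rw [ramc]
    have e1 : (Finset.Icc 1 1).filter (fun m => Nat.gcd m 1 = 1) = {1} := rfl
    have e2 : (Finset.range 1).filter (fun a => Nat.gcd a 1 = 1) = {0} := rfl
    rw [e1, e2, Finset.sum_singleton, Finset.sum_singleton]
    have e3 : ((2:ℂ) * Real.pi * Complex.I * ((1:ℕ):ℂ) * n / ((1:ℕ):ℂ))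
        = (n : ℤ) * (2 * Real.pi * Complex.I) := by push_cast; ring
    rw [e3, Complex.exp_int_mul_two_pi_mul_I]
    norm_num
  · -- m ≥ 2
    rw [ramc]
    congr 1
    ext a
    simp only [mem_filter, Finset.mem_Icc, Finset.mem_range]
    constructor
    · rintro ⟨⟨h1a, ham⟩, hgcd⟩
      refine ⟨lt_of_le_of_ne ham fun h => ?_, hgcd⟩
      subst h
      rw [Nat.gcd_self] at hgcd
      omega
    · rintro ⟨ham, hgcd⟩
      refine ⟨⟨?_, ham.le⟩, hgcd⟩
      rcases Nat.eq_zero_or_pos a with rfl | ha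
      · rw [Nat.gcd_zero_left] at hgcd; omega
      · exact ha

/-- `M(t;n,k) = Z^{χ_n}_{R(C_k)}(t,…,t)`, where `C_k` is realized as
`Multiplicative (ZMod k)` acting on itself by translation (regular representation)
and `χ_n` sends the element corresponding to `j` to `e^{2πinj/k}`. -/
theorem stmt4 (n k : ℕ) [NeZero k] (t : ℂ) :
    neck t n k
      = (1 / (k : ℂ)) * ∑ g : Multiplicative (ZMod k),
          Complex.exp (2 * Real.pi * Complex.I * n * ((Multiplicative.toAdd g).val : ℂ) / k) *
            t ^ totalCycles (Equiv.mulLeft g) := by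
  have hk : k ≠ 0 := NeZero.ne k
  have hkpos : 0 < k := Nat.pos_of_ne_zero hk
  have hrhs : ∑ g : Multiplicative (ZMod k),
        Complex.exp (2 * Real.pi * Complex.I * n * ((Multiplicative.toAdd g).val : ℂ) / k) *
          t ^ totalCycles (Equiv.mulLeft g)
      = ∑ j ∈ Finset.range k,
        Complex.exp (2 * Real.pi * Complex.I * n * (j : ℂ) / k) * t ^ Nat.gcd j k := by
    refine Finset.sum_bij' (fun (g : Multiplicative (ZMod k)) _ => (Multiplicative.toAdd g).val)
      (fun (j : ℕ) _ => Multiplicative.ofAdd ((j : ℕ) : ZMod k)) ?_ ?_ ?_ ?_ ?_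
    · intro g _; exact Finset.mem_range.2 (ZMod.val_lt _)
    · intro j hj; exact Finset.mem_univ _
    · intro g _
      simp [ZMod.natCast_rightInverse (Multiplicative.toAdd g)]
    · intro j hj
      simp [ZMod.val_cast_of_lt (Finset.mem_range.1 hj)]
    · intro g _
      rw [totalCycles_zmod]
  rw [hrhs]
  have hfib : ∑ j ∈ Finset.range k,
        Complex.exp (2 * Real.pi * Complex.I * n * (j : ℂ) / k) * t ^ Nat.gcd j k
      = ∑ d ∈ k.divisors, ∑ j ∈ (Finset.range k).filter (fun j => Nat.gcd j k = d),
          Complex.exp (2 * Real.pi * Complex.I * n * (j : ℂ) / k) * t ^ Nat.gcd j k := by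
    rw [Finset.sum_fiberwise_of_maps_to]
    intro j hj
    rw [Nat.mem_divisors]
    exact ⟨Nat.gcd_dvd_right _ _, hk⟩
  rw [hfib, neck]
  congr 1
  apply Finset.sum_congr rfl
  intro d hd
  rw [Nat.mem_divisors] at hd
  obtain ⟨hdvd, -⟩ := hd
  have hdpos : 0 < d := Nat.pos_of_dvd_of_pos hdvd hkpos
  have hkd : (k / d) * d = k := Nat.div_mul_cancel hdvd
  have hfix : ∑ j ∈ (Finset.range k).filter (fun j => Nat.gcd j k = d),
        Complex.exp (2 * Real.pi * Complex.I * n * (j : ℂ) / k) * t ^ Nat.gcd j k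
      = ∑ j ∈ (Finset.range k).filter (fun j => Nat.gcd j k = d),
        Complex.exp (2 * Real.pi * Complex.I * n * (j : ℂ) / k) * t ^ d :=
    Finset.sum_congr rfl (fun j hj => by rw [(Finset.mem_filter.1 hj).2])
  rw [hfix, ramc_range, Finset.sum_mul]
  refine Finset.sum_bij' (fun (a : ℕ) _ => a * d) (fun (j : ℕ) _ => j / d) ?_ ?_ ?_ ?_ ?_
  · intro a ha
    rw [Finset.mem_filter, Finset.mem_range] at ha ⊢
    obtain ⟨halt, hacop⟩ := ha
    constructor
    · calc a * d < (k / d) * d := (Nat.mul_lt_mul_right hdpos).2 halt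
        _ = k := hkd
    · have h5 := Nat.gcd_mul_right a d (k / d)
      rw [hkd] at h5
      rw [h5, hacop, one_mul]
  · intro j hj
    rw [Finset.mem_filter, Finset.mem_range] at hj ⊢
    obtain ⟨hjlt, hjgcd⟩ := hj
    have hdj : d ∣ j := hjgcd ▸ Nat.gcd_dvd_left _ _
    constructor
    · exact Nat.div_lt_div_of_lt_of_dvd hdvd hjlt
    · have h3 : Nat.gcd (j / d * d) k = d := by rw [Nat.div_mul_cancel hdj]; exact hjgcd
      rw [← hkd, Nat.gcd_mul_right] at h3
      have := Nat.eq_of_mul_eq_mul_right hdpos (h3.trans (one_mul d).symm)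
      exact this
  · intro a ha
    exact Nat.mul_div_cancel a hdpos
  · intro j hj
    rw [Finset.mem_filter] at hj
    have hdj : d ∣ j := hj.2 ▸ Nat.gcd_dvd_left _ _
    exact Nat.div_mul_cancel hdj
  · intro a ha
    congr 1
    · congr 1
      have hkdne : ((k / d : ℕ) : ℂ) ≠ 0 := by
        have h4 : 0 < k / d := Nat.div_pos (Nat.le_of_dvd hkpos hdvd) hdpos
        exact_mod_cast h4.ne'
      have hkne : (k : ℂ) ≠ 0 := by exact_mod_cast hk
      have hcast : ((k / d : ℕ) : ℂ) * (d : ℂ) = (k : ℂ) :=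
        by exact_mod_cast congrArg (Nat.cast : ℕ → ℂ) hkd
      push_cast
      rw [div_eq_div_iff hkdne hkne, ← hcast]
      ring
end

section
/- For positive integers k, b and divisors l_1,...,l_s of k, the number N_k(b; l_1,...,l_s) of tuples (x_1,...,x_s) with x_i mod k, x_1 + ... + x_s ≡ b (mod k) and gcd(x_i, k) = l_i for all i, equals (1/k) Σ_{d|k} c(b,d) Π_{i=1}^s c(k/d, k/l_i), where c is the Ramanujan sum. -/
open Finset

open Complex

noncomputable def Ee (k n : ℕ) : ℂ := Complex.exp (2 * Real.pi * Complex.I * n / k)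

lemma Ee_zero (k : ℕ) : Ee k 0 = 1 := by simp [Ee]

lemma Ee_add (k a b : ℕ) : Ee k (a + b) = Ee k a * Ee k b := by
  rw [Ee, Ee, Ee, ← Complex.exp_add]
  congr 1
  push_cast
  ring

lemma Ee_self_mul (k m : ℕ) : Ee k (k * m) = 1 := by
  rcases Nat.eq_zero_or_pos k with hk | hk
  · simp [hk, Ee]
  · rw [Ee]
    have hk' : (k : ℂ) ≠ 0 := Nat.cast_ne_zero.mpr hk.ne'
    have : 2 * (Real.pi : ℂ) * Complex.I * (↑(k * m)) / k = (m : ℕ) * (2 * Real.pi * Complex.I) := by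
      push_cast; field_simp
    rw [this, Complex.exp_nat_mul, Complex.exp_two_pi_mul_I, one_pow]

lemma Ee_mod (k a : ℕ) : Ee k (a % k) = Ee k a := by
  conv_rhs => rw [← Nat.div_add_mod a k]
  rw [Ee_add, Ee_self_mul, one_mul]

lemma Ee_congr {k a b : ℕ} (h : a ≡ b [MOD k]) : Ee k a = Ee k b := by
  rw [← Ee_mod k a, ← Ee_mod k b]
  exact congrArg (Ee k) h

lemma Ee_pow (k t a : ℕ) : Ee k (t * a) = (Ee k a) ^ t := by
  rw [Ee, Ee, ← Complex.exp_nat_mul]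
  congr 1
  push_cast
  ring

lemma Ee_eq_one {k a : ℕ} (h : k ∣ a) : Ee k a = 1 := by
  obtain ⟨m, rfl⟩ := h; exact Ee_self_mul k m

lemma Ee_ne_one {k a : ℕ} (hk : 0 < k) (h : ¬ k ∣ a) : Ee k a ≠ 1 := by
  intro hc
  rw [Ee, Complex.exp_eq_one_iff] at hc
  obtain ⟨n, hn⟩ := hc
  have h2 : (2 * (Real.pi:ℂ) * Complex.I) ≠ 0 := by
    simp [Real.pi_ne_zero, Complex.I_ne_zero]
  have hk' : (k : ℂ) ≠ 0 := Nat.cast_ne_zero.mpr hk.ne'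
  have h3 : (a : ℂ) = (n : ℤ) * k := by
    field_simp at hn
    have hn2 : 2 * (Real.pi:ℂ) * Complex.I * a = 2 * (Real.pi:ℂ) * Complex.I * ((n:ℤ) * k) := by
      push_cast at hn ⊢; linear_combination (2 * (Real.pi:ℂ) * Complex.I) * hn
    exact mul_left_cancel₀ h2 hn2
  have h4 : (a : ℤ) = n * k := by exact_mod_cast h3
  have : (k : ℤ) ∣ (a : ℤ) := ⟨n, by linarith⟩
  exact h (Int.natCast_dvd_natCast.mp this)

lemma Ee_div {k d : ℕ} (hk : 0 < k) (hd : d ∣ k) (x : ℕ) : Ee k (k / d * x) = Ee d x := by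
  have hd0 : 0 < d := Nat.pos_of_dvd_of_pos hd hk
  have hkc : (k : ℂ) ≠ 0 := Nat.cast_ne_zero.mpr hk.ne'
  have hdc : (d : ℂ) ≠ 0 := Nat.cast_ne_zero.mpr hd0.ne'
  rw [Ee, Ee]
  congr 1
  have hcast : ((k / d : ℕ) : ℂ) = (k : ℂ) / d := by
    rw [Nat.cast_div hd hdc]
  push_cast [hcast]
  field_simp

lemma orth_range {k : ℕ} (hk : 0 < k) (a : ℕ) :
    ∑ t ∈ range k, Ee k (t * a) = if k ∣ a then (k : ℂ) else 0 := by
  by_cases h : k ∣ a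
  · rw [if_pos h]
    have : ∀ t ∈ range k, Ee k (t * a) = 1 := fun t _ => Ee_eq_one (h.mul_left t)
    rw [Finset.sum_congr rfl this, Finset.sum_const, card_range, nsmul_eq_mul, mul_one]
  · rw [if_neg h]
    have hx := Ee_ne_one hk h
    have h1 : ∑ t ∈ range k, Ee k (t * a) = ∑ t ∈ range k, (Ee k a) ^ t :=
      Finset.sum_congr rfl fun t _ => Ee_pow k t a
    rw [h1, geom_sum_eq hx]
    have : Ee k a ^ k = 1 := by rw [← Ee_pow, mul_comm]; exact Ee_eq_one (dvd_mul_left k a)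
    rw [this]
    simp

lemma sum_Icc_eq_sum_range {f : ℕ → ℂ} {k : ℕ} (h : f k = f 0) :
    ∑ t ∈ Icc 1 k, f t = ∑ t ∈ range k, f t := by
  rcases Nat.eq_zero_or_pos k with hk | hk
  · subst hk; rfl
  · obtain ⟨k', rfl⟩ := Nat.exists_eq_succ_of_ne_zero hk.ne'
    rw [← Finset.Ico_add_one_right_eq_Icc, Finset.sum_Ico_eq_sum_range]
    have h2 : k' + 1 + 1 - 1 = k' + 1 := by omega
    rw [h2]
    rw [Finset.sum_range_succ, Finset.sum_range_succ']
    rw [show (1 + k') = k' + 1 by omega, h]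
    congr 1
    exact Finset.sum_congr rfl fun i _ => by rw [add_comm]

lemma orth_Icc {k : ℕ} (hk : 0 < k) (a : ℕ) :
    ∑ t ∈ Icc 1 k, Ee k (t * a) = if k ∣ a then (k : ℂ) else 0 := by
  rw [sum_Icc_eq_sum_range, orth_range hk]
  rw [zero_mul, Ee_zero, mul_comm]
  exact Ee_eq_one (dvd_mul_left k a)

open ArithmeticFunction ArithmeticFunction.Moebius ArithmeticFunction.zeta in
lemma moebius_sum (n : ℕ) :
    ∑ d ∈ n.divisors, (μ d : ℂ) = if n = 1 then 1 else 0 := by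
  have h1 : (μ * ζ : ArithmeticFunction ℤ) n = ∑ d ∈ n.divisors, μ d :=
    coe_mul_zeta_apply
  rw [moebius_mul_coe_zeta] at h1
  rw [one_apply] at h1
  have := congrArg (fun z : ℤ => (z : ℂ)) h1.symm
  simpa using this

lemma ramc_eq (n m : ℕ) :
    ramc n m = ∑ j ∈ (Icc 1 m).filter (fun j => Nat.gcd j m = 1), Ee m (j * n) := by
  refine Finset.sum_congr rfl fun j _ => ?_
  rw [Ee]
  congr 1
  push_cast
  ring

set_option maxHeartbeats 1000000 in
lemma vonSterneck {m : ℕ} (hm : 0 < m) (n : ℕ) :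
    ramc n m = ∑ e ∈ m.divisors,
      (ArithmeticFunction.moebius (m / e) : ℂ) * (if e ∣ n then (e : ℂ) else 0) := by
  have hm' : m ≠ 0 := hm.ne'
  rw [ramc_eq, Finset.sum_filter]
  -- replace indicator by moebius sum
  have step1 : ∀ j ∈ Icc 1 m,
      (if Nat.gcd j m = 1 then Ee m (j * n) else 0)
        = ∑ e ∈ m.divisors, (if e ∣ j then (ArithmeticFunction.moebius e : ℂ) * Ee m (j * n) else 0) := by
    intro j hj
    have hj1 : 1 ≤ j := (Finset.mem_Icc.mp hj).1
    have hgcd : (Nat.gcd j m).divisors = m.divisors.filter (fun e => e ∣ j) := by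
      ext e
      simp only [Nat.mem_divisors, Finset.mem_filter]
      constructor
      · rintro ⟨he, -⟩
        exact ⟨⟨he.trans (Nat.gcd_dvd_right j m), hm'⟩, he.trans (Nat.gcd_dvd_left j m)⟩
      · rintro ⟨⟨hem, -⟩, hej⟩
        exact ⟨Nat.dvd_gcd hej hem, fun hc => hm' (Nat.eq_zero_of_gcd_eq_zero_right hc)⟩
    have := moebius_sum (Nat.gcd j m)
    rw [hgcd, Finset.sum_filter] at this
    calc (if Nat.gcd j m = 1 then Ee m (j * n) else 0)
        = (if Nat.gcd j m = 1 then (1:ℂ) else 0) * Ee m (j * n) := by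
          split <;> simp
      _ = (∑ e ∈ m.divisors, (if e ∣ j then (ArithmeticFunction.moebius e : ℂ) else 0)) * Ee m (j * n) := by
          rw [← this]
      _ = _ := by
          rw [Finset.sum_mul]
          exact Finset.sum_congr rfl fun e _ => by split <;> simp
  rw [Finset.sum_congr rfl step1, Finset.sum_comm]
  refine (Finset.sum_congr rfl fun e he => ?_).trans
    (Nat.sum_div_divisors m (fun e => (ArithmeticFunction.moebius (m / e) : ℂ) * (if e ∣ n then (e : ℂ) else 0)))
  -- per-divisor computation
  have hem := (Nat.mem_divisors.mp he).1
  have he0 : 0 < e := Nat.pos_of_dvd_of_pos hem hm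
  have hme : 0 < m / e := Nat.div_pos (Nat.le_of_dvd hm hem) he0
  have hinner : ∑ j ∈ Icc 1 m, (if e ∣ j then (ArithmeticFunction.moebius e : ℂ) * Ee m (j * n) else 0)
      = (ArithmeticFunction.moebius e : ℂ) * ∑ h ∈ Icc 1 (m / e), Ee (m / e) (h * n) := by
    rw [← Finset.sum_filter, ← Finset.mul_sum]
    congr 1
    refine Finset.sum_nbij' (fun j => j / e) (fun h => e * h) ?_ ?_ ?_ ?_ ?_
    · intro j hj
      simp only [Finset.mem_filter, Finset.mem_Icc] at hj ⊢
      obtain ⟨⟨hj1, hjm⟩, hej⟩ := hj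
      refine ⟨Nat.one_le_div_iff he0 |>.mpr (Nat.le_of_dvd hj1 hej), Nat.div_le_div_right hjm⟩
    · intro h hh
      simp only [Finset.mem_filter, Finset.mem_Icc] at hh ⊢
      obtain ⟨hh1, hhm⟩ := hh
      refine ⟨⟨Nat.one_le_iff_ne_zero.mpr (by positivity), ?_⟩, Dvd.intro h rfl⟩
      calc e * h ≤ e * (m / e) := Nat.mul_le_mul_left e hhm
        _ = m := Nat.mul_div_cancel' hem
    · intro j hj
      simp only [Finset.mem_filter] at hj
      exact Nat.mul_div_cancel' hj.2
    · intro h hh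
      exact Nat.mul_div_cancel_left h he0
    · intro j hj
      simp only [Finset.mem_filter] at hj
      obtain ⟨-, hej⟩ := hj
      have hj2 : j * n = m / (m / e) * (j / e * n) := by
        rw [Nat.div_div_self hem hm', ← mul_assoc, Nat.mul_div_cancel' hej]
      rw [hj2, Ee_div hm (Nat.div_dvd_of_dvd hem)]
  rw [hinner, orth_Icc hme n]
  have : m / (m / e) = e := Nat.div_div_self hem hm'
  rw [this]

lemma ramc_gcd {m : ℕ} (hm : 0 < m) {n n' : ℕ} (h : Nat.gcd n m = Nat.gcd n' m) :
    ramc n m = ramc n' m := by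
  rw [vonSterneck hm, vonSterneck hm]
  refine Finset.sum_congr rfl fun e he => ?_
  have hem := (Nat.mem_divisors.mp he).1
  have hiff : (e ∣ n) ↔ (e ∣ n') := by
    constructor <;> intro hd
    · have h1 : e ∣ Nat.gcd n m := Nat.dvd_gcd hd hem
      rw [h] at h1
      exact h1.trans (Nat.gcd_dvd_left _ _)
    · have h1 : e ∣ Nat.gcd n' m := Nat.dvd_gcd hd hem
      rw [← h] at h1
      exact h1.trans (Nat.gcd_dvd_left _ _)
  simp only [hiff]

lemma partition {k : ℕ} (hk : 0 < k) (f : ℕ → ℂ) :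
    ∑ t ∈ Icc 1 k, f t
      = ∑ d ∈ k.divisors, ∑ u ∈ (Icc 1 d).filter (fun u => Nat.gcd u d = 1), f (k / d * u) := by
  rw [Finset.sum_sigma']
  refine Finset.sum_nbij' (fun t => ⟨k / Nat.gcd t k, t / Nat.gcd t k⟩)
    (fun p => k / p.1 * p.2) ?_ ?_ ?_ ?_ ?_
  · intro t ht
    simp only [Finset.mem_Icc] at ht
    obtain ⟨ht1, htk⟩ := ht
    have hg : 0 < Nat.gcd t k := Nat.gcd_pos_of_pos_left k ht1
    have hgk : Nat.gcd t k ∣ k := Nat.gcd_dvd_right t k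
    have hgt : Nat.gcd t k ∣ t := Nat.gcd_dvd_left t k
    simp only [Finset.mem_sigma, Nat.mem_divisors, Finset.mem_filter, Finset.mem_Icc]
    refine ⟨⟨Nat.div_dvd_of_dvd hgk, hk.ne'⟩, ⟨Nat.one_le_div_iff hg |>.mpr (Nat.le_of_dvd ht1 hgt),
      Nat.div_le_div_right htk⟩, Nat.coprime_div_gcd_div_gcd hg⟩
  · rintro ⟨d, u⟩ hp
    simp only [Finset.mem_sigma, Nat.mem_divisors, Finset.mem_filter, Finset.mem_Icc] at hp
    obtain ⟨⟨hdk, -⟩, ⟨hu1, hud⟩, -⟩ := hp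
    have hd0 : 0 < d := Nat.pos_of_dvd_of_pos hdk hk
    have hkd : 0 < k / d := Nat.div_pos (Nat.le_of_dvd hk hdk) hd0
    simp only [Finset.mem_Icc]
    constructor
    · calc 1 ≤ k / d := hkd
        _ ≤ k / d * u := Nat.le_mul_of_pos_right _ hu1
    · calc k / d * u ≤ k / d * d := Nat.mul_le_mul_left _ hud
        _ = k := Nat.div_mul_cancel hdk
  · intro t ht
    simp only [Finset.mem_Icc] at ht
    have hg : 0 < Nat.gcd t k := Nat.gcd_pos_of_pos_left k ht.1
    have hgk : Nat.gcd t k ∣ k := Nat.gcd_dvd_right t k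
    have hgt : Nat.gcd t k ∣ t := Nat.gcd_dvd_left t k
    simp only []
    rw [Nat.div_div_self hgk hk.ne', Nat.mul_div_cancel' hgt]
  · rintro ⟨d, u⟩ hp
    simp only [Finset.mem_sigma, Nat.mem_divisors, Finset.mem_filter, Finset.mem_Icc] at hp
    obtain ⟨⟨hdk, -⟩, ⟨hu1, hud⟩, hcop⟩ := hp
    have hd0 : 0 < d := Nat.pos_of_dvd_of_pos hdk hk
    have hkd : 0 < k / d := Nat.div_pos (Nat.le_of_dvd hk hdk) hd0
    have hkey : Nat.gcd (k / d * u) k = k / d := by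
      have hgm := Nat.gcd_mul_left (k / d) u d
      rw [Nat.div_mul_cancel hdk] at hgm
      rw [hgm, hcop, mul_one]
    have h1 : k / (k / d) = d := Nat.div_div_self hdk hk.ne'
    have h2 : k / d * u / (k / d) = u := Nat.mul_div_cancel_left u hkd
    show (⟨k / Nat.gcd (k / d * u) k, k / d * u / Nat.gcd (k / d * u) k⟩ : (_ : ℕ) × ℕ) = ⟨d, u⟩
    rw [hkey, h1, h2]
  · intro t ht
    simp only [Finset.mem_Icc] at ht
    have hg : 0 < Nat.gcd t k := Nat.gcd_pos_of_pos_left k ht.1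
    have hgk : Nat.gcd t k ∣ k := Nat.gcd_dvd_right t k
    have hgt : Nat.gcd t k ∣ t := Nat.gcd_dvd_left t k
    rw [Nat.div_div_self hgk hk.ne', Nat.mul_div_cancel' hgt]

lemma sumA {k l : ℕ} [NeZero k] (hl : l ∣ k) (t : ℕ) :
    ∑ x ∈ Finset.univ.filter (fun x : ZMod k => Nat.gcd x.val k = l), Ee k (t * x.val)
      = ramc t (k / l) := by
  have hk : 0 < k := Nat.pos_of_ne_zero (NeZero.ne k)
  have hl0 : 0 < l := Nat.pos_of_dvd_of_pos hl hk
  have hlM : l * (k / l) = k := Nat.mul_div_cancel' hl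
  have hM : 0 < k / l := Nat.div_pos (Nat.le_of_dvd hk hl) hl0
  have hMk : (k / l) ∣ k := Nat.div_dvd_of_dvd hl
  have hkM : k / (k / l) = l := Nat.div_div_self hl hk.ne'
  rw [ramc_eq]
  refine (Finset.sum_nbij' (fun m => ((l * m : ℕ) : ZMod k))
    (fun x => if x.val = 0 then k / l else x.val / l) ?_ ?_ ?_ ?_ ?_).symm
  · intro m hm
    simp only [Finset.mem_filter, Finset.mem_Icc] at hm ⊢
    obtain ⟨⟨hm1, hmM⟩, hcop⟩ := hm
    refine ⟨Finset.mem_univ _, ?_⟩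
    rw [ZMod.val_natCast]
    rcases lt_or_eq_of_le hmM with hlt | heq
    · have hltk : l * m < k := by
        calc l * m < l * (k / l) := (Nat.mul_lt_mul_left hl0).mpr hlt
          _ = k := hlM
      rw [Nat.mod_eq_of_lt hltk]
      conv_lhs => rw [show k = l * (k / l) from hlM.symm]
      rw [Nat.gcd_mul_left, hcop, mul_one]
    · -- m = k / l, so coprimality forces k / l = 1
      subst heq
      rw [Nat.gcd_self] at hcop
      have hlk : l = k := by rw [← hlM, hcop, mul_one]
      rw [hlM, Nat.mod_self, Nat.gcd_zero_left, hlk]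
  · intro x hx
    simp only [Finset.mem_filter, Finset.mem_univ, true_and] at hx
    by_cases h0 : x.val = 0
    · rw [h0, Nat.gcd_zero_left] at hx
      have h1 : k / l = 1 := by rw [← hx, Nat.div_self hk]
      rw [if_pos h0, h1]
      simp only [Finset.mem_filter, Finset.mem_Icc, h1]
      exact ⟨⟨le_refl 1, le_refl 1⟩, Nat.gcd_self 1⟩
    · have hlx : l ∣ x.val := hx ▸ Nat.gcd_dvd_left x.val k
      have hx1 : 1 ≤ x.val / l := (Nat.one_le_div_iff hl0).mpr (Nat.le_of_dvd (Nat.pos_of_ne_zero h0) hlx)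
      have hxM : x.val / l ≤ k / l := Nat.div_le_div_right (le_of_lt (ZMod.val_lt x))
      have hcop : Nat.gcd (x.val / l) (k / l) = 1 := by
        have hmul : l * Nat.gcd (x.val / l) (k / l) = l := by
          conv_rhs => rw [← hx]
          rw [← Nat.gcd_mul_left, Nat.mul_div_cancel' hlx, Nat.mul_div_cancel' hl]
        exact Nat.eq_of_mul_eq_mul_left hl0 (by rw [hmul, mul_one])
      rw [if_neg h0]
      simp only [Finset.mem_filter, Finset.mem_Icc]
      exact ⟨⟨hx1, hxM⟩, hcop⟩
  · intro m hm
    simp only [Finset.mem_filter, Finset.mem_Icc] at hm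
    obtain ⟨⟨hm1, hmM⟩, hcop⟩ := hm
    rcases lt_or_eq_of_le hmM with hlt | heq
    · have hltk : l * m < k := by
        calc l * m < l * (k / l) := (Nat.mul_lt_mul_left hl0).mpr hlt
          _ = k := hlM
      have hval : ((l * m : ℕ) : ZMod k).val = l * m := by
        rw [ZMod.val_natCast, Nat.mod_eq_of_lt hltk]
      have hne : ((l * m : ℕ) : ZMod k).val ≠ 0 := by
        rw [hval]; positivity
      rw [if_neg hne, hval, Nat.mul_div_cancel_left m hl0]
    · subst heq
      have hval : ((l * (k / l) : ℕ) : ZMod k).val = 0 := by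
        rw [hlM, ZMod.val_natCast, Nat.mod_self]
      rw [hval]
      simp
  · intro x hx
    simp only [Finset.mem_filter, Finset.mem_univ, true_and] at hx
    by_cases h0 : x.val = 0
    · rw [if_pos h0, hlM]
      have hx0 : x = 0 := (ZMod.val_eq_zero x).mp h0
      rw [hx0, ZMod.natCast_self]
    · have hlx : l ∣ x.val := hx ▸ Nat.gcd_dvd_left x.val k
      rw [if_neg h0, Nat.mul_div_cancel' hlx]
      exact ZMod.natCast_rightInverse x
  · intro m hm
    simp only [Finset.mem_filter, Finset.mem_Icc] at hm
    obtain ⟨⟨hm1, hmM⟩, hcop⟩ := hm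
    calc Ee (k / l) (m * t)
        = Ee k (k / (k / l) * (m * t)) := (Ee_div hk hMk _).symm
      _ = Ee k (t * (l * m)) := by rw [hkM]; ring_nf
      _ = Ee k (t * (l * m % k)) :=
          Ee_congr (Nat.ModEq.mul_left t (Nat.mod_modEq _ _)).symm
      _ = Ee k (t * ((l * m : ℕ) : ZMod k).val) := by rw [ZMod.val_natCast]


/-- `N_k(b; l_1,…,l_s)`: the number of tuples `(x_1,…,x_s) ∈ (ℤ/kℤ)^s` with
`x_1 + ⋯ + x_s ≡ b (mod k)` and `gcd(x_i, k) = l_i` (representatives in `1..k`;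
note `gcd((x_i).val, k) = k` when `x_i ≡ 0`, matching the representative `k`). -/
noncomputable def Nk (k b s : ℕ) [NeZero k] (l : Fin s → ℕ) : ℕ :=
  Fintype.card {x : Fin s → ZMod k //
    (∑ i, x i) = (b : ZMod k) ∧ ∀ i, Nat.gcd (x i).val k = l i}

lemma dvd_val_iff {k : ℕ} [NeZero k] (z : ZMod k) : k ∣ z.val ↔ z = 0 := by
  rw [← ZMod.val_eq_zero]
  constructor
  · intro h; exact Nat.eq_zero_of_dvd_of_lt h (ZMod.val_lt z)
  · intro h; rw [h]; exact dvd_zero k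

lemma Ee_val_add {k : ℕ} [NeZero k] (t : ℕ) (z w : ZMod k) :
    Ee k (t * (z + w).val) = Ee k (t * z.val) * Ee k (t * w.val) := by
  rw [← Ee_add]
  apply Ee_congr
  rw [ZMod.val_add, ← mul_add]
  exact Nat.ModEq.mul_left t (Nat.mod_modEq _ _)

lemma Ee_val_sum {k s : ℕ} [NeZero k] (t : ℕ) (x : Fin s → ZMod k) :
    Ee k (t * (∑ i, x i).val) = ∏ i, Ee k (t * (x i).val) := by
  classical
  induction (Finset.univ : Finset (Fin s)) using Finset.induction_on with
  | empty => simp [ZMod.val_zero, Ee_zero]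
  | insert _ _ hni ih =>
      rw [Finset.sum_insert hni, Finset.prod_insert hni, Ee_val_add, ih]

lemma gcd_reduce {k d u m : ℕ} (hk : 0 < k) (hd : d ∣ k) (hm : m ∣ k)
    (hu : Nat.gcd u d = 1) : Nat.gcd (k / d * u) m = Nat.gcd (k / d) m := by
  have h1 : Nat.gcd (k / d * u) k = k / d := by
    have hgm := Nat.gcd_mul_left (k / d) u d
    rw [Nat.div_mul_cancel hd] at hgm
    rw [hgm, hu, mul_one]
  have hkm : Nat.gcd k m = m := by rw [Nat.gcd_comm]; exact Nat.gcd_eq_left hm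
  have h2 : ∀ a : ℕ, Nat.gcd a m = Nat.gcd (Nat.gcd a k) m := by
    intro a
    rw [Nat.gcd_assoc, hkm]
  rw [h2 (k / d * u), h1]

theorem stmt5 (k b s : ℕ) [NeZero k] (hb : 0 < b) (l : Fin s → ℕ) (hl : ∀ i, l i ∣ k) :
    (Nk k b s l : ℂ)
      = (1 / (k : ℂ)) * ∑ d ∈ k.divisors, ramc b d * ∏ i, ramc (k / d) (k / l i) := by
  classical
  have hk : 0 < k := Nat.pos_of_ne_zero (NeZero.ne k)
  have hkc : (k : ℂ) ≠ 0 := Nat.cast_ne_zero.mpr hk.ne'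
  set c : ZMod k := -(b : ZMod k) with hc
  set A : Finset (Fin s → ZMod k) :=
    Finset.univ.filter (fun x => ∀ i, Nat.gcd (x i).val k = l i) with hA
  -- cardinality description
  have hcard : (Nk k b s l : ℂ) = ((A.filter (fun x => (∑ i, x i) + c = 0)).card : ℂ) := by
    congr 1
    rw [Nk, Fintype.card_subtype]
    congr 1
    ext x
    simp only [Finset.mem_filter, Finset.mem_univ, true_and, hA, hc, add_neg_eq_zero]
    exact and_comm
  -- main identity times k
  have key : (k : ℂ) * (Nk k b s l : ℂ)
      = ∑ d ∈ k.divisors, ramc b d * ∏ i, ramc (k / d) (k / l i) := by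
    have step1 : (k : ℂ) * (Nk k b s l : ℂ)
        = ∑ x ∈ A, ∑ t ∈ Finset.range k, Ee k (t * ((∑ i, x i) + c).val) := by
      have horth : ∀ x ∈ A, ∑ t ∈ Finset.range k, Ee k (t * ((∑ i, x i) + c).val)
          = if (∑ i, x i) + c = 0 then (k : ℂ) else 0 := by
        intro x _
        rw [orth_range hk]
        congr 1
        · exact propext (dvd_val_iff _)
      rw [Finset.sum_congr rfl horth, ← Finset.sum_filter, Finset.sum_const,
        nsmul_eq_mul, hcard, mul_comm]
    have step2 : ∀ t : ℕ, ∀ x : Fin s → ZMod k,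
        Ee k (t * ((∑ i, x i) + c).val)
          = (∏ i, Ee k (t * (x i).val)) * Ee k (t * c.val) := by
      intro t x
      rw [Ee_val_add, Ee_val_sum]
    have step3 : ∀ t : ℕ, ∑ x ∈ A, ∏ i, Ee k (t * (x i).val)
        = ∏ i, ramc t (k / l i) := by
      intro t
      have hA2 : A = Fintype.piFinset
          (fun i => Finset.univ.filter (fun y : ZMod k => Nat.gcd y.val k = l i)) := by
        ext x
        simp [hA, Fintype.mem_piFinset]
      have hps := Finset.prod_univ_sum
        (fun i => Finset.univ.filter (fun y : ZMod k => Nat.gcd y.val k = l i))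
        (fun i y => Ee k (t * y.val))
      rw [hA2, ← hps]
      exact Finset.prod_congr rfl fun i _ => sumA (hl i) t
    have step123 : (k : ℂ) * (Nk k b s l : ℂ)
        = ∑ t ∈ Finset.range k, (∏ i, ramc t (k / l i)) * Ee k (t * c.val) := by
      rw [step1, Finset.sum_comm]
      refine Finset.sum_congr rfl fun t _ => ?_
      rw [Finset.sum_congr rfl (fun x _ => step2 t x), ← Finset.sum_mul, step3]
    -- shift to Icc 1 k
    have hM : ∀ i, 0 < k / l i := fun i =>
      Nat.div_pos (Nat.le_of_dvd hk (hl i)) (Nat.pos_of_dvd_of_pos (hl i) hk)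
    have hMk : ∀ i, k / l i ∣ k := fun i => Nat.div_dvd_of_dvd (hl i)
    have hF0 : (∏ i, ramc k (k / l i)) * Ee k (k * c.val)
        = (∏ i, ramc 0 (k / l i)) * Ee k (0 * c.val) := by
      congr 1
      · refine Finset.prod_congr rfl fun i _ => ramc_gcd (hM i) ?_
        rw [Nat.gcd_comm k, Nat.gcd_eq_left (hMk i), Nat.gcd_zero_left]
      · rw [Ee_eq_one (dvd_mul_right k c.val), zero_mul, Ee_zero]
    have step4 : (k : ℂ) * (Nk k b s l : ℂ)
        = ∑ t ∈ Finset.Icc 1 k, (∏ i, ramc t (k / l i)) * Ee k (t * c.val) := by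
      rw [step123, sum_Icc_eq_sum_range hF0]
    -- partition by gcd
    rw [step4, partition hk]
    refine Finset.sum_congr rfl fun d hd => ?_
    have hdk := (Nat.mem_divisors.mp hd).1
    have hd0 : 0 < d := Nat.pos_of_dvd_of_pos hdk hk
    -- inner sum over u
    have hinner : ∀ u ∈ (Finset.Icc 1 d).filter (fun u => Nat.gcd u d = 1),
        (∏ i, ramc (k / d * u) (k / l i)) * Ee k ((k / d * u) * c.val)
          = (∏ i, ramc (k / d) (k / l i)) * Ee d (u * c.val) := by
      intro u hu
      simp only [Finset.mem_filter, Finset.mem_Icc] at hu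
      congr 1
      · refine Finset.prod_congr rfl fun i _ => ramc_gcd (hM i) ?_
        exact gcd_reduce hk hdk (hMk i) hu.2
      · rw [mul_assoc, Ee_div hk hdk]
    rw [Finset.sum_congr rfl hinner, ← Finset.mul_sum]
    have hsum : ∑ u ∈ (Finset.Icc 1 d).filter (fun u => Nat.gcd u d = 1), Ee d (u * c.val)
        = ramc c.val d := (ramc_eq c.val d).symm
    rw [hsum]
    -- ramc c.val d = ramc b d
    have hzero : ((c.val + b : ℕ) : ZMod k) = 0 := by
      push_cast
      rw [ZMod.natCast_zmod_val, hc]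
      ring
    have hkdvd : k ∣ c.val + b := (ZMod.natCast_eq_zero_iff _ k).mp hzero
    have hddvd : d ∣ c.val + b := hdk.trans hkdvd
    have hgcd : Nat.gcd c.val d = Nat.gcd b d := by
      apply Nat.dvd_antisymm
      · refine Nat.dvd_gcd ?_ (Nat.gcd_dvd_right _ _)
        have h1 : Nat.gcd c.val d ∣ c.val + b :=
          (Nat.gcd_dvd_right c.val d).trans hddvd
        have h2 := Nat.dvd_sub h1 (Nat.gcd_dvd_left c.val d)
        rwa [Nat.add_sub_cancel_left] at h2
      · refine Nat.dvd_gcd ?_ (Nat.gcd_dvd_right _ _)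
        have h1 : Nat.gcd b d ∣ c.val + b :=
          (Nat.gcd_dvd_right b d).trans hddvd
        have h2 := Nat.dvd_sub h1 (Nat.gcd_dvd_left b d)
        rwa [Nat.add_sub_cancel] at h2
    rw [ramc_gcd hd0 hgcd, mul_comm]
  -- conclude
  rw [← key]
  field_simp
end

section
/- For positive integers k, b, s and a variable t, Σ over all tuples of divisors (l_1,...,l_s) of k of N_k(b; l_1,...,l_s)·t^{l_1+...+l_s} equals (1/k) Σ_{d|k} c(b,d)·(k·M(t; k/d, k))^s. -/
open Finset

noncomputable def eI (a : ℤ) (m : ℕ) : ℂ :=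
  Complex.exp (2 * Real.pi * Complex.I * a / m)

lemma eI_add (m : ℕ) (a b : ℤ) : eI (a + b) m = eI a m * eI b m := by
  rw [eI, eI, eI, ← Complex.exp_add]; congr 1; push_cast; ring

lemma eI_zero (m : ℕ) : eI 0 m = 1 := by simp [eI]

lemma eI_int_mul_self (m : ℕ) (hm : m ≠ 0) (c : ℤ) : eI (c * m) m = 1 := by
  rw [eI]
  have hm' : (m : ℂ) ≠ 0 := Nat.cast_ne_zero.mpr hm
  have h2 : 2 * (Real.pi : ℂ) * Complex.I * (((c * m : ℤ) : ℂ)) / m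
      = c * (2 * Real.pi * Complex.I) := by
    push_cast; field_simp
  rw [h2, Complex.exp_int_mul_two_pi_mul_I]

lemma eI_pow (m : ℕ) (a : ℤ) (j : ℕ) : eI (j * a) m = (eI a m) ^ j := by
  rw [eI, eI, ← Complex.exp_nat_mul]; congr 1; push_cast; ring

lemma sum_range_eI (m : ℕ) (hm : 0 < m) (a : ℤ) :
    ∑ j ∈ Finset.range m, eI (j * a) m = if (m : ℤ) ∣ a then (m : ℂ) else 0 := by
  by_cases h : (m : ℤ) ∣ a
  · obtain ⟨c, rfl⟩ := h
    have h1 : ∀ j ∈ Finset.range m, eI (j * ((m : ℤ) * c)) m = 1 := by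
      intro j _
      have h2 : (j : ℤ) * (m * c) = (j * c) * m := by ring
      rw [h2, eI_int_mul_self m hm.ne']
    rw [Finset.sum_congr rfl h1, if_pos ⟨c, rfl⟩, Finset.sum_const, Finset.card_range]
    simp
  · have hπ : (2 : ℂ) * Real.pi * Complex.I ≠ 0 := by
      simp [Real.pi_ne_zero, Complex.I_ne_zero, Complex.ofReal_ne_zero]
    have hm' : (m : ℂ) ≠ 0 := Nat.cast_ne_zero.mpr hm.ne'
    have hne : eI a m ≠ 1 := by
      intro h1
      rw [eI, Complex.exp_eq_one_iff] at h1
      obtain ⟨n, hn⟩ := h1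
      apply h
      refine ⟨n, ?_⟩
      have h3 : (a : ℂ) = m * n := by
        field_simp at hn
        apply mul_left_cancel₀ hπ
        linear_combination (2 * (Real.pi : ℂ) * Complex.I) * hn
      exact_mod_cast h3
    have hgeo : ∀ j ∈ Finset.range m, eI (j * a) m = (eI a m) ^ j :=
      fun j _ => eI_pow m a j
    rw [Finset.sum_congr rfl hgeo, geom_sum_eq hne, if_neg h]
    have hpow : eI a m ^ m = 1 := by
      rw [← eI_pow]
      have : (m : ℤ) * a = a * m := by ring
      rw [this, eI_int_mul_self m hm.ne']
    rw [hpow]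
    simp

lemma sum_range_eq_sum_Icc {f : ℕ → ℂ} (m : ℕ) (hf : f 0 = f m) :
    ∑ j ∈ Finset.range m, f j = ∑ j ∈ Finset.Icc 1 m, f j := by
  have h1 : Finset.range (m + 1) = insert 0 (Finset.Icc 1 m) := by
    ext x
    simp [Finset.mem_range, Nat.lt_succ_iff, Nat.one_le_iff_ne_zero]
    omega
  have h2 : ∑ j ∈ Finset.range (m + 1), f j = f 0 + ∑ j ∈ Finset.Icc 1 m, f j := by
    rw [h1, Finset.sum_insert (by simp)]
  rw [Finset.sum_range_succ, hf] at h2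
  rw [add_comm (f m)] at h2
  exact add_right_cancel h2

lemma sum_Icc_eI (m : ℕ) (hm : 0 < m) (a : ℤ) :
    ∑ j ∈ Finset.Icc 1 m, eI (j * a) m = if (m : ℤ) ∣ a then (m : ℂ) else 0 := by
  rw [← sum_range_eq_sum_Icc m, sum_range_eI m hm a]
  have : (m : ℤ) * a = a * m := by ring
  rw [Nat.cast_zero, zero_mul, eI_zero, this, eI_int_mul_self m hm.ne']

-- ramc in eI form
lemma ramc_eq_eI (n q : ℕ) :
    ramc n q = ∑ m ∈ (Finset.Icc 1 q).filter (fun m => Nat.gcd m q = 1), eI (m * n) q := by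
  refine Finset.sum_congr rfl fun m _ => ?_
  rw [eI]; congr 1; push_cast; ring

lemma eI_cancel (e q : ℕ) (he : e ≠ 0) (hq : e ∣ q) (a : ℤ) :
    eI (e * a) q = eI a (q / e) := by
  obtain ⟨r, rfl⟩ := hq
  rw [Nat.mul_div_cancel_left r (Nat.pos_of_ne_zero he)]
  rw [eI, eI]
  congr 1
  rcases Nat.eq_zero_or_pos r with rfl | hr
  · simp
  have he' : (e : ℂ) ≠ 0 := Nat.cast_ne_zero.mpr he
  have hr' : (r : ℂ) ≠ 0 := Nat.cast_ne_zero.mpr hr.ne'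
  push_cast
  field_simp

lemma sum_Icc_filter_dvd (q e : ℕ) (hq : 0 < q) (he : e ∣ q) (f : ℕ → ℂ) :
    ∑ m ∈ (Finset.Icc 1 q).filter (fun m => e ∣ m), f m
      = ∑ v ∈ Finset.Icc 1 (q / e), f (e * v) := by
  have he0 : 0 < e := Nat.pos_of_dvd_of_pos he hq
  refine Finset.sum_nbij' (fun m => m / e) (fun v => e * v) ?_ ?_ ?_ ?_ ?_
  · intro m hm
    simp only [Finset.mem_filter, Finset.mem_Icc] at hm ⊢
    obtain ⟨⟨h1, h2⟩, hd⟩ := hm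
    constructor
    · exact Nat.one_le_div_iff he0 |>.mpr (Nat.le_of_dvd (by omega) hd)
    · exact Nat.div_le_div_right h2
  · intro v hv
    simp only [Finset.mem_filter, Finset.mem_Icc] at hv ⊢
    refine ⟨⟨by nlinarith [hv.1], ?_⟩, ⟨v, rfl⟩⟩
    calc e * v ≤ e * (q / e) := Nat.mul_le_mul_left e hv.2
    _ = q := Nat.mul_div_cancel' he
  · intro m hm
    simp only [Finset.mem_filter] at hm
    exact Nat.mul_div_cancel' hm.2
  · intro v hv
    exact Nat.mul_div_cancel_left v he0
  · intro m hm
    simp only [Finset.mem_filter] at hm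
    rw [Nat.mul_div_cancel' hm.2]

lemma sum_moebius_divisors (x : ℕ) (hx : x ≠ 0) :
    ∑ e ∈ x.divisors, ((ArithmeticFunction.moebius e : ℤ) : ℂ)
      = if x = 1 then 1 else 0 := by
  have h := congrArg (fun f => f x) ArithmeticFunction.moebius_mul_coe_zeta
  simp only [ArithmeticFunction.coe_mul_zeta_apply, ArithmeticFunction.one_apply] at h
  calc ∑ e ∈ x.divisors, ((ArithmeticFunction.moebius e : ℤ) : ℂ)
      = ((∑ e ∈ x.divisors, ArithmeticFunction.moebius e : ℤ) : ℂ) := by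
        rw [Int.cast_sum]
    _ = _ := by rw [h]; split <;> simp

lemma ramc_holder (n q : ℕ) (hq : 0 < q) :
    ramc n q = ∑ e ∈ q.divisors,
      ((ArithmeticFunction.moebius e : ℤ) : ℂ) *
        (if (q / e) ∣ n then ((q / e : ℕ) : ℂ) else 0) := by
  rw [ramc_eq_eI, Finset.sum_filter]
  have step1 : ∀ m ∈ Finset.Icc 1 q,
      (if Nat.gcd m q = 1 then eI (m * n) q else 0)
        = ∑ e ∈ q.divisors, (if e ∣ m then ((ArithmeticFunction.moebius e : ℤ) : ℂ) * eI (m * n) q else 0) := by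
    intro m hm
    simp only [Finset.mem_Icc] at hm
    have hdiv : q.divisors.filter (fun e => e ∣ m) = (Nat.gcd m q).divisors := by
      ext e
      simp only [Finset.mem_filter, Nat.mem_divisors, Nat.dvd_gcd_iff]
      constructor
      · rintro ⟨⟨h1, _⟩, h2⟩; exact ⟨⟨h2, h1⟩, Nat.gcd_ne_zero_right hq.ne'⟩
      · rintro ⟨⟨h1, h2⟩, _⟩; exact ⟨⟨h2, hq.ne'⟩, h1⟩
    rw [← Finset.sum_filter, hdiv, ← Finset.sum_mul,
      sum_moebius_divisors _ (Nat.gcd_ne_zero_right hq.ne')]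
    by_cases h : Nat.gcd m q = 1 <;> simp [h]
  rw [Finset.sum_congr rfl step1, Finset.sum_comm]
  refine Finset.sum_congr rfl fun e he => ?_
  simp only [Nat.mem_divisors] at he
  rw [← Finset.sum_filter, ← Finset.mul_sum,
    sum_Icc_filter_dvd q e hq he.1 (fun m => eI (m * n) q)]
  have he0 : e ≠ 0 := by rintro rfl; exact hq.ne' (Nat.eq_zero_of_zero_dvd he.1)
  have hqe : 0 < q / e := Nat.div_pos (Nat.le_of_dvd hq he.1) (Nat.pos_of_ne_zero he0)
  have hterm : ∀ v ∈ Finset.Icc 1 (q / e), eI (((e * v : ℕ) : ℤ) * n) q = eI (v * n) (q / e) := by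
    intro v _
    have h1 : ((e * v : ℕ) : ℤ) * n = e * ((v : ℤ) * n) := by push_cast; ring
    rw [h1, eI_cancel e q he0 he.1]
  rw [Finset.sum_congr rfl hterm, sum_Icc_eI _ hqe]
  congr 1
  have h2 : ((q / e : ℕ) : ℤ) ∣ (n : ℤ) ↔ (q / e) ∣ n := Int.natCast_dvd_natCast
  simp only [h2]

/-- Ramanujan sums only depend on `n` through divisibility by divisors. -/
lemma ramc_congr (j j' m k : ℕ) (hk : 0 < k) (hm : m ∣ k)
    (h : Nat.gcd j k = Nat.gcd j' k) : ramc j m = ramc j' m := by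
  have hm0 : 0 < m := Nat.pos_of_dvd_of_pos hm hk
  rw [ramc_holder j m hm0, ramc_holder j' m hm0]
  refine Finset.sum_congr rfl fun e he => ?_
  congr 1
  have hdk : (m / e) ∣ k := dvd_trans (Nat.div_dvd_of_dvd (Nat.mem_divisors.mp he).1) hm
  have key : ∀ n : ℕ, Nat.gcd n k = Nat.gcd j k → ((m / e) ∣ n ↔ (m / e) ∣ Nat.gcd j k) := by
    intro n hn
    constructor
    · intro hd; rw [← hn]; exact Nat.dvd_gcd hd hdk
    · intro hd; rw [← hn] at hd; exact dvd_trans hd (Nat.gcd_dvd_left n k)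
  rw [if_congr ((key j rfl).trans (key j' h.symm).symm) rfl rfl]

/-- Summing over a gcd fiber equals summing over coprime residues of the quotient. -/
lemma fiber_to_coprime (k w : ℕ) (hk : 0 < k) (hw : w ∣ k) (f : ℕ → ℂ) :
    ∑ u ∈ (Finset.Icc 1 k).filter (fun u => Nat.gcd u k = w), f u
      = ∑ m ∈ (Finset.Icc 1 (k / w)).filter (fun m => Nat.gcd m (k / w) = 1), f (w * m) := by
  have hw0 : 0 < w := Nat.pos_of_dvd_of_pos hw hk
  have hkw : w * (k / w) = k := Nat.mul_div_cancel' hw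
  refine Finset.sum_nbij' (fun u => u / w) (fun m => w * m) ?_ ?_ ?_ ?_ ?_
  · intro u hu
    simp only [Finset.mem_filter, Finset.mem_Icc] at hu ⊢
    obtain ⟨⟨h1, h2⟩, hg⟩ := hu
    have hwu : w ∣ u := hg ▸ Nat.gcd_dvd_left u k
    refine ⟨⟨(Nat.one_le_div_iff hw0).mpr (Nat.le_of_dvd (by omega) hwu), Nat.div_le_div_right h2⟩, ?_⟩
    have hmul : w * Nat.gcd (u / w) (k / w) = w * 1 := by
      rw [mul_one]
      conv_rhs => rw [← hg]
      rw [← Nat.gcd_mul_left, Nat.mul_div_cancel' hwu, hkw]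
    exact Nat.eq_of_mul_eq_mul_left hw0 hmul
  · intro m hm
    simp only [Finset.mem_filter, Finset.mem_Icc] at hm ⊢
    obtain ⟨⟨h1, h2⟩, hg⟩ := hm
    refine ⟨⟨Nat.one_le_iff_ne_zero.mpr (Nat.mul_ne_zero hw0.ne' (by omega)), by calc w * m ≤ w * (k / w) := Nat.mul_le_mul_left w h2
      _ = k := hkw⟩, ?_⟩
    conv_lhs => rw [← hkw]
    rw [Nat.gcd_mul_left, hg, mul_one]
  · intro u hu
    simp only [Finset.mem_filter] at hu
    exact Nat.mul_div_cancel' (hu.2 ▸ Nat.gcd_dvd_left u k)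
  · intro m _; exact Nat.mul_div_cancel_left m hw0
  · intro u hu
    simp only [Finset.mem_filter] at hu
    rw [Nat.mul_div_cancel' (hu.2 ▸ Nat.gcd_dvd_left u k)]

/-- Conjugate symmetry of the Ramanujan sum. -/
lemma ramc_neg (q b : ℕ) (hq : 0 < q) :
    ∑ u ∈ (Finset.Icc 1 q).filter (fun u => Nat.gcd u q = 1), eI (-(u * b)) q = ramc b q := by
  rw [ramc_eq_eI]
  refine Finset.sum_nbij' (fun u => if u = q then q else q - u)
    (fun u => if u = q then q else q - u) ?_ ?_ ?_ ?_ ?_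
  · intro u hu
    simp only [Finset.mem_filter, Finset.mem_Icc] at hu ⊢
    obtain ⟨⟨h1, h2⟩, hg⟩ := hu
    by_cases h : u = q
    · subst h; simp only [if_pos rfl]; exact ⟨⟨h1, le_refl u⟩, hg⟩
    · rw [if_neg h]
      refine ⟨⟨by omega, by omega⟩, ?_⟩
      rw [← Nat.Coprime]; rw [Nat.coprime_self_sub_left h2]; exact hg
  · intro u hu
    simp only [Finset.mem_filter, Finset.mem_Icc] at hu ⊢
    obtain ⟨⟨h1, h2⟩, hg⟩ := hu
    by_cases h : u = q
    · subst h; simp only [if_pos rfl]; exact ⟨⟨h1, le_refl u⟩, hg⟩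
    · rw [if_neg h]
      refine ⟨⟨by omega, by omega⟩, ?_⟩
      rw [← Nat.Coprime]; rw [Nat.coprime_self_sub_left h2]; exact hg
  · intro u hu
    simp only [Finset.mem_filter, Finset.mem_Icc] at hu
    by_cases h : u = q
    · simp [h]
    · rw [if_neg h]
      have h2 : ¬(q - u = q) := by omega
      rw [if_neg h2, Nat.sub_sub_self (by omega)]
  · intro u hu
    simp only [Finset.mem_filter, Finset.mem_Icc] at hu
    by_cases h : u = q
    · simp [h]
    · rw [if_neg h]
      have h2 : ¬(q - u = q) := by omega
      rw [if_neg h2, Nat.sub_sub_self (by omega)]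
  · intro u hu
    simp only [Finset.mem_filter, Finset.mem_Icc] at hu
    obtain ⟨⟨h1, h2⟩, hg⟩ := hu
    by_cases h : u = q
    · subst h
      rw [if_pos rfl]
      have e1 : -((u : ℤ) * b) = (-(b : ℤ)) * u := by ring
      have e2 : ((u : ℤ)) * b = (b : ℤ) * u := by ring
      rw [e1, eI_int_mul_self u (by omega), e2, eI_int_mul_self u (by omega)]
    · rw [if_neg h]
      have hcast : ((q - u : ℕ) : ℤ) = (q : ℤ) - u := by omega
      have e3 : ((q - u : ℕ) : ℤ) * b = -((u : ℤ) * b) + (b : ℤ) * q := by rw [hcast]; ring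
      rw [e3, eI_add, eI_int_mul_self q hq.ne', mul_one]

lemma fiber_exp_eq_ramc (k d' j : ℕ) (hk : 0 < k) (hd : d' ∣ k) :
    ∑ u ∈ (Finset.Icc 1 k).filter (fun u => Nat.gcd u k = d'), eI (j * u) k
      = ramc j (k / d') := by
  have hd0 : d' ≠ 0 := (Nat.pos_of_dvd_of_pos hd hk).ne'
  rw [fiber_to_coprime k d' hk hd (fun u => eI (j * u) k), ramc_eq_eI]
  refine Finset.sum_congr rfl fun m hm => ?_
  have e1 : (j : ℤ) * ((d' * m : ℕ) : ℤ) = (d' : ℤ) * ((m : ℤ) * j) := by push_cast; ring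
  rw [e1, eI_cancel d' k hd0 hd]

lemma fiber_negexp_eq_ramc (k w b : ℕ) (hk : 0 < k) (hw : w ∣ k) :
    ∑ u ∈ (Finset.Icc 1 k).filter (fun u => Nat.gcd u k = w), eI (-(u * b)) k
      = ramc b (k / w) := by
  have hw0 : w ≠ 0 := (Nat.pos_of_dvd_of_pos hw hk).ne'
  have hkw : 0 < k / w := Nat.div_pos (Nat.le_of_dvd hk hw) (Nat.pos_of_ne_zero hw0)
  rw [fiber_to_coprime k w hk hw (fun u => eI (-(u * b)) k)]
  rw [← ramc_neg (k / w) b hkw]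
  refine Finset.sum_congr rfl fun m hm => ?_
  have e1 : -(((w * m : ℕ) : ℤ) * b) = (w : ℤ) * (-((m : ℤ) * b)) := by push_cast; ring
  rw [e1, eI_cancel w k hw0 hw]

lemma eI_sum {ι : Type*} (S : Finset ι) (m : ℕ) (a : ι → ℤ) :
    eI (∑ i ∈ S, a i) m = ∏ i ∈ S, eI (a i) m := by
  classical
  induction S using Finset.induction_on with
  | empty => simp [eI_zero]
  | insert _ _ h ih => rw [Finset.sum_insert h, Finset.prod_insert h, eI_add, ih]

lemma zmod_sum_to_Icc (k : ℕ) [NeZero k] (g : ℕ → ℂ) (hg : g 0 = g k) :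
    ∑ u : ZMod k, g (u.val) = ∑ u ∈ Finset.Icc 1 k, g u := by
  rw [← sum_range_eq_sum_Icc k hg]
  refine Finset.sum_nbij' (fun u => u.val) (fun v => (v : ZMod k)) ?_ ?_ ?_ ?_ ?_
  · intro u _; exact Finset.mem_range.mpr (ZMod.val_lt u)
  · intro v _; exact Finset.mem_univ _
  · intro u _; exact ZMod.natCast_rightInverse u
  · intro v hv; exact ZMod.val_cast_of_lt (Finset.mem_range.mp hv)
  · intro u _; rfl

lemma Fval (k j : ℕ) (hk : 0 < k) (t : ℂ) :
    ∑ u ∈ Finset.Icc 1 k, eI (j * u) k * t ^ Nat.gcd u k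
      = ∑ d' ∈ k.divisors, ramc j (k / d') * t ^ d' := by
  have hmap : ∀ u ∈ Finset.Icc 1 k, Nat.gcd u k ∈ k.divisors := by
    intro u _
    exact Nat.mem_divisors.mpr ⟨Nat.gcd_dvd_right u k, hk.ne'⟩
  rw [← Finset.sum_fiberwise_of_maps_to hmap (fun u => eI (j * u) k * t ^ Nat.gcd u k)]
  refine Finset.sum_congr rfl fun d' hd' => ?_
  have hdk : d' ∣ k := (Nat.mem_divisors.mp hd').1
  have step : ∀ u ∈ (Finset.Icc 1 k).filter (fun u => Nat.gcd u k = d'),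
      eI (j * u) k * t ^ Nat.gcd u k = eI (j * u) k * t ^ d' := by
    intro u hu
    rw [(Finset.mem_filter.mp hu).2]
  rw [Finset.sum_congr rfl step, ← Finset.sum_mul, fiber_exp_eq_ramc k d' j hk hdk]

lemma jsum (k b s : ℕ) (hk : 0 < k) (Φ : ℕ → ℂ)
    (hΦ : ∀ j j', Nat.gcd j k = Nat.gcd j' k → Φ j = Φ j') :
    ∑ j ∈ Finset.Icc 1 k, eI (-(j * b)) k * (Φ j) ^ s
      = ∑ d ∈ k.divisors, ramc b d * (Φ (k / d)) ^ s := by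
  have hmap : ∀ u ∈ Finset.Icc 1 k, Nat.gcd u k ∈ k.divisors := by
    intro u _
    exact Nat.mem_divisors.mpr ⟨Nat.gcd_dvd_right u k, hk.ne'⟩
  rw [← Finset.sum_fiberwise_of_maps_to hmap (fun j => eI (-(j * b)) k * (Φ j) ^ s)]
  have step1 : ∀ w ∈ k.divisors,
      ∑ j ∈ (Finset.Icc 1 k).filter (fun j => Nat.gcd j k = w),
        eI (-(j * b)) k * (Φ j) ^ s
      = ramc b (k / w) * (Φ w) ^ s := by
    intro w hw
    have hwk : w ∣ k := (Nat.mem_divisors.mp hw).1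
    have step : ∀ j ∈ (Finset.Icc 1 k).filter (fun j => Nat.gcd j k = w),
        eI (-(j * b)) k * (Φ j) ^ s = eI (-(j * b)) k * (Φ w) ^ s := by
      intro j hj
      have hg : Nat.gcd j k = w := (Finset.mem_filter.mp hj).2
      rw [hΦ j w (by rw [hg, Nat.gcd_eq_left hwk])]
    rw [Finset.sum_congr rfl step, ← Finset.sum_mul, fiber_negexp_eq_ramc k w b hk hwk]
  rw [Finset.sum_congr rfl step1]
  have h2 := Nat.sum_div_divisors k (fun d => ramc b d * (Φ (k / d)) ^ s)
  rw [← h2]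
  refine Finset.sum_congr rfl fun w hw => ?_
  have hwk : w ∣ k := (Nat.mem_divisors.mp hw).1
  rw [Nat.div_div_self hwk hk.ne']

theorem stmt6 (k b s : ℕ) [NeZero k] (hb : 0 < b) (hs : 0 < s) (t : ℂ) :
    ∑ l ∈ Fintype.piFinset (fun _ : Fin s => k.divisors),
        (Nk k b s l : ℂ) * t ^ (∑ i, l i)
      = (1 / (k : ℂ)) * ∑ d ∈ k.divisors, ramc b d * ((k : ℂ) * neck t (k / d) k) ^ s := by
  classical
  have hk : 0 < k := Nat.pos_of_ne_zero (NeZero.ne k)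
  have hk' : (k : ℂ) ≠ 0 := Nat.cast_ne_zero.mpr hk.ne'
  set S : Finset (Fin s → ZMod k) :=
    Finset.univ.filter (fun x => (∑ i, x i) = (b : ZMod k)) with hS
  set g : (Fin s → ZMod k) → (Fin s → ℕ) := fun x i => Nat.gcd (x i).val k with hgdef
  -- the Φ function
  set Φ : ℕ → ℂ := fun j => ∑ d' ∈ k.divisors, ramc j (k / d') * t ^ d' with hΦdef
  have hΦ : ∀ j j', Nat.gcd j k = Nat.gcd j' k → Φ j = Φ j' := by
    intro j j' h
    refine Finset.sum_congr rfl fun d' hd' => ?_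
    rw [ramc_congr j j' (k / d') k hk (Nat.div_dvd_of_dvd (Nat.mem_divisors.mp hd').1) h]
  -- Step A : LHS as a sum over solutions
  have hNk : ∀ l : Fin s → ℕ, (Nk k b s l : ℂ) * t ^ (∑ i, l i)
      = ∑ x ∈ S.filter (fun x => g x = l), t ^ (∑ i, Nat.gcd (x i).val k) := by
    intro l
    have hcard : Nk k b s l = (S.filter (fun x => g x = l)).card := by
      simp only [Nk, Fintype.card_subtype]
      congr 1
      ext x
      simp only [hS, hgdef, Finset.mem_filter, Finset.mem_univ, true_and, funext_iff]
    rw [hcard]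
    rw [Finset.card_eq_sum_ones, Nat.cast_sum, Finset.sum_mul]
    refine Finset.sum_congr rfl fun x hx => ?_
    have hgl : g x = l := (Finset.mem_filter.mp hx).2
    rw [Nat.cast_one, one_mul, ← hgl]
  have stepA : ∑ l ∈ Fintype.piFinset (fun _ : Fin s => k.divisors),
      (Nk k b s l : ℂ) * t ^ (∑ i, l i)
      = ∑ x ∈ S, t ^ (∑ i, Nat.gcd (x i).val k) := by
    rw [Finset.sum_congr rfl fun l _ => hNk l]
    refine Finset.sum_fiberwise_of_maps_to ?_ _
    intro x _
    rw [Fintype.mem_piFinset]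
    intro i
    exact Nat.mem_divisors.mpr ⟨Nat.gcd_dvd_right _ _, hk.ne'⟩
  -- Step B : the indicator function
  have hind : ∀ x : Fin s → ZMod k,
      (if (∑ i, x i) = (b : ZMod k) then (1 : ℂ) else 0)
        = (1 / (k : ℂ)) * ∑ j ∈ Finset.Icc 1 k,
            eI (j * ((∑ i, ((x i).val : ℤ)) - b)) k := by
    intro x
    rw [sum_Icc_eI k hk]
    have hiff : (∑ i, x i) = (b : ZMod k) ↔ (k : ℤ) ∣ ((∑ i, ((x i).val : ℤ)) - b) := by
      rw [← ZMod.intCast_zmod_eq_zero_iff_dvd]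
      have hc : (((∑ i, ((x i).val : ℤ)) - b : ℤ) : ZMod k) = (∑ i, x i) - b := by
        push_cast
        congr 1
        refine Finset.sum_congr rfl fun i _ => ?_
        exact ZMod.natCast_rightInverse (x i)
      rw [hc, sub_eq_zero]
    by_cases h : (∑ i, x i) = (b : ZMod k)
    · rw [if_pos h, if_pos (hiff.mp h)]
      field_simp
    · rw [if_neg h, if_neg (fun hd => h (hiff.mpr hd))]
      ring
  -- Step B' : expand the indicator
  have stepB : ∑ x ∈ S, t ^ (∑ i, Nat.gcd (x i).val k)
      = (1 / (k : ℂ)) * ∑ j ∈ Finset.Icc 1 k, ∑ x : Fin s → ZMod k,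
          eI (j * ((∑ i, ((x i).val : ℤ)) - b)) k * t ^ (∑ i, Nat.gcd (x i).val k) := by
    rw [hS, Finset.sum_filter]
    have h1 : ∀ x : Fin s → ZMod k,
        (if (∑ i, x i) = (b : ZMod k) then t ^ (∑ i, Nat.gcd (x i).val k) else 0)
          = ((1 / (k : ℂ)) * ∑ j ∈ Finset.Icc 1 k,
              eI (j * ((∑ i, ((x i).val : ℤ)) - b)) k) * t ^ (∑ i, Nat.gcd (x i).val k) := by
      intro x
      rw [← hind x]
      by_cases h : (∑ i, x i) = (b : ZMod k) <;> simp [h]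
    rw [Finset.sum_congr rfl fun x _ => h1 x, Finset.mul_sum]
    have h2 : ∀ x : Fin s → ZMod k,
        (1 / (k : ℂ) * ∑ j ∈ Finset.Icc 1 k,
            eI (j * ((∑ i, ((x i).val : ℤ)) - b)) k) * t ^ (∑ i, Nat.gcd (x i).val k)
          = ∑ j ∈ Finset.Icc 1 k, 1 / (k : ℂ) *
              (eI (j * ((∑ i, ((x i).val : ℤ)) - b)) k * t ^ (∑ i, Nat.gcd (x i).val k)) := by
      intro x
      rw [Finset.mul_sum, Finset.sum_mul]
      simp only [mul_assoc]
    rw [Finset.sum_congr rfl fun x _ => h2 x, Finset.sum_comm]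
    exact Finset.sum_congr rfl fun j _ => (Finset.mul_sum _ _ _).symm
  -- Step C : inner sum as a power
  have stepC : ∀ j : ℕ, ∑ x : Fin s → ZMod k,
      eI (j * ((∑ i, ((x i).val : ℤ)) - b)) k * t ^ (∑ i, Nat.gcd (x i).val k)
      = eI (-(j * b)) k * (Φ j) ^ s := by
    intro j
    have hdecomp : ∀ x : Fin s → ZMod k,
        eI (j * ((∑ i, ((x i).val : ℤ)) - b)) k * t ^ (∑ i, Nat.gcd (x i).val k)
          = eI (-(j * b)) k *
              ∏ i, (eI (j * ((x i).val : ℤ)) k * t ^ (Nat.gcd (x i).val k)) := by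
      intro x
      have e1 : (j : ℤ) * ((∑ i, ((x i).val : ℤ)) - b)
          = -(j * b) + ∑ i, (j * ((x i).val : ℤ)) := by
        rw [mul_sub, Finset.mul_sum]
        ring
      rw [e1, eI_add, eI_sum Finset.univ k (fun i => (j : ℤ) * ((x i).val : ℤ)),
        ← Finset.prod_pow_eq_pow_sum, mul_assoc, ← Finset.prod_mul_distrib]
    rw [Finset.sum_congr rfl fun x _ => hdecomp x, ← Finset.mul_sum]
    congr 1
    -- (∑ u, h u)^s = ∑ x, ∏ i, h (x i)
    have hps := Finset.prod_univ_sum (fun _ : Fin s => (Finset.univ : Finset (ZMod k)))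
      (fun _ u => eI (j * (u.val : ℤ)) k * t ^ (Nat.gcd u.val k))
    rw [Fintype.piFinset_univ] at hps
    rw [← hps, Finset.prod_const, Finset.card_univ, Fintype.card_fin]
    congr 1
    -- ∑ u : ZMod k, h u.val = Φ j
    have hg0 : (fun v : ℕ => eI (j * (v : ℤ)) k * t ^ (Nat.gcd v k)) 0
        = (fun v : ℕ => eI (j * (v : ℤ)) k * t ^ (Nat.gcd v k)) k := by
      simp only [Nat.cast_zero, mul_zero, eI_zero, Nat.gcd_zero_left, Nat.gcd_self]
      rw [eI_int_mul_self k hk.ne' j]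
    rw [zmod_sum_to_Icc k (fun v => eI (j * (v : ℤ)) k * t ^ (Nat.gcd v k)) hg0]
    rw [Fval k j hk t]
  -- assemble
  rw [stepA, stepB, Finset.sum_congr rfl fun j _ => stepC j, jsum k b s hk Φ hΦ]
  congr 1
  refine Finset.sum_congr rfl fun d hd => ?_
  congr 2
  rw [hΦdef, neck]
  rw [← mul_assoc, mul_one_div, div_self hk', one_mul]
end

section
/- For positive integers k, b, s, the sum over tuples of proper divisors (l_1,...,l_s) of k (l_i | k, l_i ≠ k) of N_k(b; l_1,...,l_s)·t^{ks − (l_1+...+l_s)} equals (1/k) Σ_{d|k} c(b,d)·(β_{k,d}(t))^s. -/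
open Finset

lemma expCongr {d : ℕ} (hd : d ≠ 0) {a b : ℕ} (h : a ≡ b [MOD d]) :
    Complex.exp (2 * Real.pi * Complex.I * a / d) =
      Complex.exp (2 * Real.pi * Complex.I * b / d) := by
  obtain ⟨z, hz⟩ := (Nat.modEq_iff_dvd.mp h)
  have hd' : (d:ℂ) ≠ 0 := Nat.cast_ne_zero.mpr hd
  have hz' : (b:ℂ) - a = d * z := by exact_mod_cast hz
  have key : (2 * Real.pi * Complex.I * b / d : ℂ)
      = 2 * Real.pi * Complex.I * a / d + z * (2 * Real.pi * Complex.I) := by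
    field_simp
    linear_combination hz'
  rw [key, Complex.exp_add, Complex.exp_int_mul_two_pi_mul_I, mul_one]

noncomputable def EE (k : ℕ) (x : ZMod k) : ℂ :=
  Complex.exp (2 * Real.pi * Complex.I * (ZMod.val x) / k)

section EEk
variable {k : ℕ} [NeZero k]

lemma EE_zero : EE k 0 = 1 := by
  simp [EE]

lemma EE_add (x y : ZMod k) : EE k (x + y) = EE k x * EE k y := by
  rw [EE, EE, EE, ← Complex.exp_add]
  have h1 : (x + y).val ≡ x.val + y.val [MOD k] := by
    rw [ZMod.val_add]; exact (Nat.mod_modEq _ _)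
  rw [expCongr (NeZero.ne k) h1]
  congr 1
  push_cast
  ring

lemma EE_sum {ι : Type*} (s : Finset ι) (f : ι → ZMod k) :
    EE k (∑ i ∈ s, f i) = ∏ i ∈ s, EE k (f i) := by
  induction s using Finset.cons_induction with
  | empty => simp [EE_zero]
  | cons a s ha ih => simp [Finset.sum_cons, Finset.prod_cons, EE_add, ih]

lemma EE_natCast (n : ℕ) : EE k (n : ZMod k) = Complex.exp (2 * Real.pi * Complex.I * n / k) := by
  rw [EE]
  exact expCongr (NeZero.ne k) (by rw [ZMod.val_natCast]; exact (Nat.mod_modEq _ _))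

lemma EE_omega (x : ZMod k) : EE k x = Complex.exp (2 * Real.pi * Complex.I / k) ^ x.val := by
  rw [EE, ← Complex.exp_nat_mul]
  congr 1
  ring

lemma EE_ortho (y : ZMod k) : ∑ m : ZMod k, EE k (m * y) = if y = 0 then (k : ℂ) else 0 := by
  have hk : k ≠ 0 := NeZero.ne k
  set ω : ℂ := Complex.exp (2 * Real.pi * Complex.I / k) with hω
  have hprim : IsPrimitiveRoot ω k := Complex.isPrimitiveRoot_exp k hk
  have hωk : ω ^ k = 1 := hprim.pow_eq_one
  have hterm : ∀ m : ZMod k, EE k (m * y) = (ω ^ y.val) ^ m.val := by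
    intro m
    rw [EE_omega, ZMod.val_mul, ← pow_eq_pow_mod _ hωk, ← pow_mul, mul_comm]
  rw [Finset.sum_congr rfl (fun m _ => hterm m)]
  have hre : ∑ m : ZMod k, (ω ^ y.val) ^ m.val = ∑ j ∈ Finset.range k, (ω ^ y.val) ^ j := by
    apply Finset.sum_nbij' (fun m : ZMod k => m.val) (fun j => (j : ZMod k))
    · intro m _; exact Finset.mem_range.mpr (ZMod.val_lt m)
    · intro j _; exact Finset.mem_univ _
    · intro m _; simp [ZMod.natCast_val, ZMod.cast_id]
    · intro j hj; exact ZMod.val_cast_of_lt (Finset.mem_range.mp hj)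
    · intro m _; rfl
  rw [hre]
  by_cases hy : y = 0
  · simp [hy, ZMod.val_zero]
  · rw [if_neg hy]
    have hζ : ω ^ y.val ≠ 1 := by
      intro h1
      rw [hprim.pow_eq_one_iff_dvd] at h1
      have h2 : y.val = 0 := Nat.eq_zero_of_dvd_of_lt h1 (ZMod.val_lt y)
      exact hy (by rwa [ZMod.val_eq_zero] at h2)
    rw [geom_sum_eq hζ]
    rw [← pow_mul, mul_comm, pow_mul, hωk, one_pow, sub_self, zero_div]

lemma gcd_val_unit_mul (u : (ZMod k)ˣ) (x : ZMod k) :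
    Nat.gcd (((u : ZMod k) * x).val) k = Nat.gcd x.val k := by
  rw [ZMod.val_mul, ← Nat.gcd_rec, Nat.gcd_comm k]
  exact Nat.Coprime.gcd_mul_left_cancel _ (ZMod.val_coe_unit_coprime u)

lemma EE_inv (x : ZMod k) : EE k (-x) = (EE k x)⁻¹ := by
  have h := EE_add x (-x)
  rw [add_neg_cancel, EE_zero] at h
  exact eq_inv_of_mul_eq_one_left (by rw [mul_comm] at h; exact h.symm)

lemma EE_neg_natCast (n : ℕ) : EE k (-(n : ZMod k)) = Complex.exp (-(2 * Real.pi * Complex.I * n / k)) := by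
  rw [EE_inv, EE_natCast, ← Complex.exp_neg]


lemma hz_erase (d : ℕ) (t : ℂ) :
    hz k d t = ∑ x ∈ (Finset.univ : Finset (ZMod k)).erase 0,
      Complex.exp (2 * Real.pi * Complex.I * (x.val : ℂ) / d) * t ^ (k - Nat.gcd x.val k) := by
  have hk : k ≠ 0 := NeZero.ne k
  rw [hz]
  apply Finset.sum_nbij' (fun r : ℕ => (r : ZMod k)) (fun x : ZMod k => x.val)
  · intro r hr
    simp only [Finset.mem_Icc] at hr
    have hrk : r < k := lt_of_le_of_lt hr.2 (Nat.sub_lt (Nat.pos_of_ne_zero hk) one_pos)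
    refine Finset.mem_erase.mpr ⟨?_, Finset.mem_univ _⟩
    intro h0
    have hv := ZMod.val_cast_of_lt hrk
    rw [h0, ZMod.val_zero] at hv
    omega
  · intro x hx
    have hx0 := (Finset.mem_erase.mp hx).1
    have hv0 : x.val ≠ 0 := fun h => hx0 (by rwa [ZMod.val_eq_zero] at h)
    exact Finset.mem_Icc.mpr ⟨Nat.pos_of_ne_zero hv0, Nat.le_pred_of_lt (ZMod.val_lt x)⟩
  · intro r hr
    simp only [Finset.mem_Icc] at hr
    exact ZMod.val_cast_of_lt (lt_of_le_of_lt hr.2 (Nat.sub_lt (Nat.pos_of_ne_zero hk) one_pos))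
  · intro x _
    simp [ZMod.natCast_val, ZMod.cast_id]
  · intro r hr
    simp only [Finset.mem_Icc] at hr
    have hrk : r < k := lt_of_le_of_lt hr.2 (Nat.sub_lt (Nat.pos_of_ne_zero hk) one_pos)
    rw [ZMod.val_cast_of_lt hrk, Nat.gcd_comm]

lemma S_eq_hz (t : ℂ) (m : ZMod k) :
    ∑ x ∈ (Finset.univ : Finset (ZMod k)).erase 0, EE k (m * x) * t ^ (k - Nat.gcd x.val k)
      = hz k (k / Nat.gcd m.val k) t := by
  have hk : k ≠ 0 := NeZero.ne k
  set g := Nat.gcd m.val k with hgdef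
  have hgk : g ∣ k := Nat.gcd_dvd_right _ _
  have hg0 : g ≠ 0 := fun h => hk (Nat.eq_zero_of_gcd_eq_zero_right h)
  set d := k / g with hddef
  have hdk : d ∣ k := Nat.div_dvd_of_dvd hgk
  have hgd : g * d = k := Nat.mul_div_cancel' hgk
  have hd0 : d ≠ 0 := by intro h; rw [h, mul_zero] at hgd; exact hk hgd.symm
  have : NeZero d := ⟨hd0⟩
  set a := m.val / g with hadef
  have hag : g * a = m.val := Nat.mul_div_cancel' (Nat.gcd_dvd_left _ _)
  have hco : Nat.Coprime a d := Nat.coprime_div_gcd_div_gcd (Nat.pos_of_ne_zero hg0)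
  have key1 : ∀ x : ZMod k, EE k (m * x) =
      Complex.exp (2 * Real.pi * Complex.I * ((a * x.val : ℕ) : ℂ) / d) := by
    intro x
    rw [EE]
    have h1 : (m * x).val ≡ m.val * x.val [MOD k] := by
      rw [ZMod.val_mul]; exact Nat.mod_modEq _ _
    rw [expCongr hk h1]
    congr 1
    have hd' : (d:ℂ) ≠ 0 := Nat.cast_ne_zero.mpr hd0
    have hg' : (g:ℂ) ≠ 0 := Nat.cast_ne_zero.mpr hg0
    have hk' : (k:ℂ) = g * d := by exact_mod_cast hgd.symm
    have hm' : (m.val : ℂ) = g * a := by exact_mod_cast hag.symm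
    push_cast
    rw [hm', hk']
    field_simp
  have key2 : ∃ u : (ZMod k)ˣ, ∀ x : ZMod k, a * ((u : ZMod k) * x).val ≡ x.val [MOD d] := by
    obtain ⟨u, hu⟩ := ZMod.unitsMap_surjective hdk ((ZMod.unitOfCoprime a hco)⁻¹)
    refine ⟨u, fun x => ?_⟩
    have hcast : ∀ y : ZMod k, ((y.val : ℕ) : ZMod d) = ZMod.castHom hdk (ZMod d) y := by
      intro y; rw [ZMod.natCast_val, ZMod.castHom_apply]
    rw [← ZMod.natCast_eq_natCast_iff]
    push_cast
    rw [hcast, hcast, map_mul]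
    have hu' : (ZMod.castHom hdk (ZMod d)) (u : ZMod k)
        = ((ZMod.unitOfCoprime a hco)⁻¹ : (ZMod d)ˣ) := by
      have h2 := congrArg (Units.val) hu
      rwa [ZMod.unitsMap_def, Units.coe_map] at h2
    rw [hu']
    have ha' : (a : ZMod d) = (ZMod.unitOfCoprime a hco : (ZMod d)ˣ) :=
      (ZMod.coe_unitOfCoprime a hco).symm
    rw [ha', ← mul_assoc, ← Units.val_mul, mul_inv_cancel, Units.val_one, one_mul]
  obtain ⟨u, hu⟩ := key2
  have step2 : ∑ x ∈ (Finset.univ : Finset (ZMod k)).erase 0,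
        Complex.exp (2 * Real.pi * Complex.I * (x.val : ℂ) / d) * t ^ (k - Nat.gcd x.val k)
      = ∑ x ∈ (Finset.univ : Finset (ZMod k)).erase 0,
        Complex.exp (2 * Real.pi * Complex.I * ((a * x.val : ℕ) : ℂ) / d) * t ^ (k - Nat.gcd x.val k) := by
    apply Finset.sum_nbij' (fun x => (u : ZMod k) * x) (fun x => ((u⁻¹ : (ZMod k)ˣ) : ZMod k) * x)
    · intro x hx
      refine Finset.mem_erase.mpr ⟨?_, Finset.mem_univ _⟩
      have := (Finset.mem_erase.mp hx).1
      simpa [Units.mul_right_eq_zero] using this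
    · intro x hx
      refine Finset.mem_erase.mpr ⟨?_, Finset.mem_univ _⟩
      have := (Finset.mem_erase.mp hx).1
      simpa [Units.mul_right_eq_zero] using this
    · intro x _
      rw [← mul_assoc, ← Units.val_mul, inv_mul_cancel, Units.val_one, one_mul]
    · intro x _
      rw [← mul_assoc, ← Units.val_mul, mul_inv_cancel, Units.val_one, one_mul]
    · intro x _
      rw [expCongr hd0 (hu x).symm, gcd_val_unit_mul]
  calc ∑ x ∈ (Finset.univ : Finset (ZMod k)).erase 0, EE k (m * x) * t ^ (k - Nat.gcd x.val k)
      = ∑ x ∈ (Finset.univ : Finset (ZMod k)).erase 0,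
          Complex.exp (2 * Real.pi * Complex.I * ((a * x.val : ℕ) : ℂ) / d) * t ^ (k - Nat.gcd x.val k) :=
        Finset.sum_congr rfl (fun x _ => by rw [key1])
    _ = ∑ x ∈ (Finset.univ : Finset (ZMod k)).erase 0,
          Complex.exp (2 * Real.pi * Complex.I * (x.val : ℂ) / d) * t ^ (k - Nat.gcd x.val k) := step2.symm
    _ = hz k d t := (hz_erase d t).symm

lemma ramc_alt (bn d : ℕ) (hd0 : d ≠ 0) :
    (∑ m ∈ (Finset.Icc 1 d).filter (fun m => Nat.gcd m d = 1),
      Complex.exp (2 * Real.pi * Complex.I * m * bn / d))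
    = ∑ j ∈ (Finset.range d).filter (fun j => Nat.gcd j d = 1),
      Complex.exp (-(2 * Real.pi * Complex.I * j * bn / d)) := by
  have hdpos : 0 < d := Nat.pos_of_ne_zero hd0
  have hd' : (d:ℂ) ≠ 0 := Nat.cast_ne_zero.mpr hd0
  apply Finset.sum_nbij' (fun m => d - m) (fun j => d - j)
  · intro m hm
    simp only [Finset.mem_filter, Finset.mem_Icc] at hm
    refine Finset.mem_filter.mpr ⟨Finset.mem_range.mpr (Nat.sub_lt hdpos hm.1.1), ?_⟩
    rw [Nat.gcd_self_sub_left hm.1.2]; exact hm.2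
  · intro j hj
    simp only [Finset.mem_filter, Finset.mem_range] at hj
    refine Finset.mem_filter.mpr ⟨Finset.mem_Icc.mpr ⟨?_, Nat.sub_le _ _⟩, ?_⟩
    · omega
    · rw [Nat.gcd_self_sub_left (le_of_lt hj.1)]; exact hj.2
  · intro m hm
    simp only [Finset.mem_filter, Finset.mem_Icc] at hm
    omega
  · intro j hj
    simp only [Finset.mem_filter, Finset.mem_range] at hj
    omega
  · intro m hm
    simp only [Finset.mem_filter, Finset.mem_Icc] at hm
    have hcast : ((d - m : ℕ) : ℂ) = (d:ℂ) - m := by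
      push_cast [hm.1.2]; ring
    have harg : (2 * Real.pi * Complex.I * m * bn / d : ℂ)
        = -(2 * Real.pi * Complex.I * ((d - m : ℕ):ℂ) * bn / d) + (bn:ℤ) * (2 * Real.pi * Complex.I) := by
      rw [hcast]
      push_cast
      field_simp
      ring
    rw [harg, Complex.exp_add, Complex.exp_int_mul_two_pi_mul_I, mul_one]

lemma fiber_ram (bn d : ℕ) (hd : d ∣ k) :
    ∑ m ∈ Finset.univ.filter (fun m : ZMod k => k / Nat.gcd m.val k = d),
        EE k (m * (-(bn : ZMod k)))
      = ∑ m ∈ (Finset.Icc 1 d).filter (fun m => Nat.gcd m d = 1),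
          Complex.exp (2 * Real.pi * Complex.I * m * bn / d) := by
  have hk : k ≠ 0 := NeZero.ne k
  have hd0 : d ≠ 0 := fun h => hk (Nat.eq_zero_of_zero_dvd (h ▸ hd))
  set e := k / d with hedef
  have he : e * d = k := Nat.div_mul_cancel hd
  have he0 : e ≠ 0 := by intro h; rw [h, zero_mul] at he; exact hk he.symm
  have hepos : 0 < e := Nat.pos_of_ne_zero he0
  rw [ramc_alt bn d hd0]
  have hgcd_of : ∀ m : ZMod k, k / Nat.gcd m.val k = d → Nat.gcd m.val k = e := by
    intro m hm
    have hGk : Nat.gcd m.val k ∣ k := Nat.gcd_dvd_right _ _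
    have := Nat.div_div_self hGk hk
    rw [hm] at this
    rw [← this]
  apply Finset.sum_nbij' (fun m : ZMod k => m.val / e) (fun j => ((e * j : ℕ) : ZMod k))
  · intro m hm
    have hm' := hgcd_of m (Finset.mem_filter.mp hm).2
    have heM : e ∣ m.val := hm' ▸ Nat.gcd_dvd_left _ _
    have hj : e * (m.val / e) = m.val := Nat.mul_div_cancel' heM
    refine Finset.mem_filter.mpr ⟨Finset.mem_range.mpr ?_, ?_⟩
    · have : m.val < e * d := by rw [he]; exact ZMod.val_lt m
      have h2 : e * (m.val / e) < e * d := by rw [hj]; exact this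
      exact Nat.lt_of_mul_lt_mul_left h2
    · have h3 : Nat.gcd (e * (m.val / e)) (e * d) = e := by rw [hj, he]; exact hm'
      rw [Nat.gcd_mul_left] at h3
      exact Nat.eq_of_mul_eq_mul_left hepos (h3.trans (mul_one e).symm)
  · intro j hj
    simp only [Finset.mem_filter, Finset.mem_range] at hj
    have hlt : e * j < k := by rw [← he]; exact mul_lt_mul_of_pos_left hj.1 hepos
    have hval : ((e * j : ℕ) : ZMod k).val = e * j := ZMod.val_cast_of_lt hlt
    refine Finset.mem_filter.mpr ⟨Finset.mem_univ _, ?_⟩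
    rw [hval, ← he, Nat.gcd_mul_left, hj.2, mul_one, Nat.mul_div_cancel_left _ hepos]
  · intro m hm
    have hm' := hgcd_of m (Finset.mem_filter.mp hm).2
    have heM : e ∣ m.val := hm' ▸ Nat.gcd_dvd_left _ _
    rw [Nat.mul_div_cancel' heM]
    simp [ZMod.natCast_val, ZMod.cast_id]
  · intro j hj
    simp only [Finset.mem_filter, Finset.mem_range] at hj
    have hlt : e * j < k := by rw [← he]; exact mul_lt_mul_of_pos_left hj.1 hepos
    rw [ZMod.val_cast_of_lt hlt, Nat.mul_div_cancel_left _ hepos]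
  · intro m hm
    have hm' := hgcd_of m (Finset.mem_filter.mp hm).2
    have heM : e ∣ m.val := hm' ▸ Nat.gcd_dvd_left _ _
    have hj : e * (m.val / e) = m.val := Nat.mul_div_cancel' heM
    have hrw : m * (-(bn : ZMod k)) = -(((m.val * bn : ℕ) : ZMod k)) := by
      push_cast
      rw [ZMod.natCast_val, ZMod.cast_id]
      ring
    rw [hrw, EE_neg_natCast]
    congr 1
    have hk' : (k:ℂ) = e * d := by exact_mod_cast he.symm
    have hmv : (m.val : ℂ) = e * (m.val / e : ℕ) := by exact_mod_cast hj.symm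
    have hd' : (d:ℂ) ≠ 0 := Nat.cast_ne_zero.mpr hd0
    have he' : (e:ℂ) ≠ 0 := Nat.cast_ne_zero.mpr he0
    push_cast
    rw [hmv, hk']
    push_cast
    field_simp


theorem stmt7 (k b s : ℕ) [NeZero k] (hb : 0 < b) (hs : 0 < s) (t : ℂ) :
    ∑ l ∈ Fintype.piFinset (fun _ : Fin s => k.divisors.erase k),
        (Nk k b s l : ℂ) * t ^ (k * s - ∑ i, l i)
      = (1 / (k : ℂ)) * ∑ d ∈ k.divisors, ramc b d * (hz k d t) ^ s := by
  classical
  have hk : k ≠ 0 := NeZero.ne k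
  have hkC : (k : ℂ) ≠ 0 := Nat.cast_ne_zero.mpr hk
  set s0 : Finset (Fin s → ZMod k) :=
    univ.filter (fun x => (∑ i, x i) = (b : ZMod k)) with hs0
  set P : Finset (Fin s → ZMod k) :=
    Fintype.piFinset (fun _ : Fin s => (univ : Finset (ZMod k)).erase 0) with hP
  -- pointwise divisor fact
  have hpt : ∀ z : ZMod k, (Nat.gcd z.val k ∈ k.divisors.erase k) ↔ z ≠ 0 := by
    intro z
    rw [Finset.mem_erase, Nat.mem_divisors]
    constructor
    · rintro ⟨h1, -⟩ h0
      exact h1 (by rw [h0, ZMod.val_zero, Nat.gcd_zero_left])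
    · intro hz
      refine ⟨?_, Nat.gcd_dvd_right _ _, hk⟩
      intro h
      have h2 : k ∣ z.val := by
        have h2' := Nat.gcd_dvd_left z.val k
        rwa [h] at h2'
      have h3 := Nat.eq_zero_of_dvd_of_lt h2 (ZMod.val_lt z)
      exact hz (by rwa [ZMod.val_eq_zero] at h3)
  -- Step A : rewrite each Nk term as a fiber sum
  have hNk : ∀ l : Fin s → ℕ, (Nk k b s l : ℕ)
      = (s0.filter (fun x => (fun i => Nat.gcd (x i).val k) = l)).card := by
    intro l
    rw [Nk, Fintype.card_subtype, hs0, Finset.filter_filter]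
    congr 1
    ext x
    simp [funext_iff]
  have stepA : ∀ l ∈ Fintype.piFinset (fun _ : Fin s => k.divisors.erase k),
      (Nk k b s l : ℂ) * t ^ (k * s - ∑ i, l i)
        = ∑ x ∈ s0.filter (fun x => (fun i => Nat.gcd (x i).val k) = l),
            t ^ (k * s - ∑ i, Nat.gcd (x i).val k) := by
    intro l _
    rw [hNk l]
    rw [show (((s0.filter (fun x => (fun i => Nat.gcd (x i).val k) = l)).card : ℕ) : ℂ)
          * t ^ (k * s - ∑ i, l i)
        = ∑ x ∈ s0.filter (fun x => (fun i => Nat.gcd (x i).val k) = l),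
            t ^ (k * s - ∑ i, l i) by rw [Finset.sum_const, nsmul_eq_mul]]
    refine Finset.sum_congr rfl (fun x hx => ?_)
    have hxl := (Finset.mem_filter.mp hx).2
    rw [← hxl]
  rw [Finset.sum_congr rfl stepA,
    Finset.sum_fiberwise_eq_sum_filter s0 (Fintype.piFinset fun _ : Fin s => k.divisors.erase k)
      (fun x => (fun i => Nat.gcd (x i).val k)) (fun x => t ^ (k * s - ∑ i, Nat.gcd (x i).val k))]
  -- identify the filtered set
  have hsetEq : s0.filter
        (fun x => (fun i => Nat.gcd (x i).val k) ∈ Fintype.piFinset (fun _ : Fin s => k.divisors.erase k))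
      = P.filter (fun x => (∑ i, x i) = (b : ZMod k)) := by
    ext x
    simp only [hs0, hP, Finset.mem_filter, Finset.mem_univ, true_and, Fintype.mem_piFinset]
    constructor
    · rintro ⟨h1, h2⟩
      exact ⟨fun i => Finset.mem_erase.mpr ⟨(hpt _).mp (h2 i), Finset.mem_univ _⟩, h1⟩
    · rintro ⟨h1, h2⟩
      exact ⟨h2, fun i => (hpt _).mpr (Finset.mem_erase.mp (h1 i)).1⟩
  rw [hsetEq]
  -- rewrite power as product
  have hF : ∀ x : Fin s → ZMod k,
      t ^ (k * s - ∑ i, Nat.gcd (x i).val k) = ∏ i, t ^ (k - Nat.gcd (x i).val k) := by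
    intro x
    rw [Finset.prod_pow_eq_pow_sum]
    congr 1
    have hle : ∀ i ∈ (univ : Finset (Fin s)), Nat.gcd (x i).val k ≤ k :=
      fun i _ => Nat.le_of_dvd (Nat.pos_of_ne_zero hk) (Nat.gcd_dvd_right _ _)
    rw [Finset.sum_tsub_distrib _ hle, Finset.sum_const, Finset.card_univ, Fintype.card_fin,
      smul_eq_mul, mul_comm]
  rw [Finset.sum_congr rfl (fun x _ => hF x)]
  -- indicator
  have hind : ∀ y : ZMod k,
      (if y = (b : ZMod k) then (1 : ℂ) else 0) = (1 / (k : ℂ)) * ∑ m : ZMod k, EE k (m * (y - b)) := by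
    intro y
    rw [EE_ortho (y - (b : ZMod k))]
    by_cases h : y = (b : ZMod k)
    · rw [if_pos h, if_pos (sub_eq_zero_of_eq h), mul_comm, mul_one_div, div_self hkC]
    · rw [if_neg h, if_neg (fun hc => h (sub_eq_zero.mp hc)), mul_zero]
  have hfilter : ∑ x ∈ P.filter (fun x => (∑ i, x i) = (b : ZMod k)),
        ∏ i, t ^ (k - Nat.gcd (x i).val k)
      = ∑ x ∈ P, ((1 / (k : ℂ)) * ∑ m : ZMod k, EE k (m * ((∑ i, x i) - b)))
          * ∏ i, t ^ (k - Nat.gcd (x i).val k) := by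
    rw [Finset.sum_filter]
    refine Finset.sum_congr rfl (fun x _ => ?_)
    rw [← hind]
    split_ifs with h
    · rw [one_mul]
    · rw [zero_mul]
  rw [hfilter]
  -- pull out 1/k and swap sums
  have hswap : ∑ x ∈ P, ((1 / (k : ℂ)) * ∑ m : ZMod k, EE k (m * ((∑ i, x i) - b)))
        * ∏ i, t ^ (k - Nat.gcd (x i).val k)
      = (1 / (k : ℂ)) * ∑ m : ZMod k, ∑ x ∈ P,
          EE k (m * ((∑ i, x i) - b)) * ∏ i, t ^ (k - Nat.gcd (x i).val k) := by
    simp_rw [mul_assoc, Finset.sum_mul, Finset.mul_sum]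
    rw [Finset.sum_comm]
  rw [hswap]
  congr 1
  -- inner sums
  have hinner : ∀ m : ZMod k,
      ∑ x ∈ P, EE k (m * ((∑ i, x i) - b)) * ∏ i, t ^ (k - Nat.gcd (x i).val k)
        = EE k (m * (-(b : ZMod k))) * (hz k (k / Nat.gcd m.val k) t) ^ s := by
    intro m
    have h1 : ∀ x : Fin s → ZMod k,
        EE k (m * ((∑ i, x i) - b)) * ∏ i, t ^ (k - Nat.gcd (x i).val k)
          = EE k (m * (-(b : ZMod k))) * ∏ i, (EE k (m * x i) * t ^ (k - Nat.gcd (x i).val k)) := by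
      intro x
      rw [Finset.prod_mul_distrib]
      have h2 : m * ((∑ i, x i) - b) = m * (-(b : ZMod k)) + ∑ i, m * x i := by
        rw [← Finset.mul_sum]; ring
      rw [h2, EE_add, EE_sum]
      ring
    rw [Finset.sum_congr rfl (fun x _ => h1 x), ← Finset.mul_sum]
    congr 1
    have hps := Finset.prod_univ_sum (fun _ : Fin s => (univ : Finset (ZMod k)).erase 0)
      (fun _ z => EE k (m * z) * t ^ (k - Nat.gcd z.val k))
    rw [hP, ← hps, Finset.prod_const, Finset.card_univ, Fintype.card_fin, S_eq_hz]
  rw [Finset.sum_congr rfl (fun m _ => hinner m)]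
  -- regroup by divisors
  have hD : ∀ m : ZMod k, k / Nat.gcd m.val k ∈ k.divisors := by
    intro m
    exact Nat.mem_divisors.mpr ⟨Nat.div_dvd_of_dvd (Nat.gcd_dvd_right _ _), hk⟩
  rw [← Finset.sum_fiberwise_of_maps_to (fun m _ => hD m)
    (fun m => EE k (m * (-(b : ZMod k))) * (hz k (k / Nat.gcd m.val k) t) ^ s)]
  refine Finset.sum_congr rfl (fun d hd => ?_)
  have hdk : d ∣ k := (Nat.mem_divisors.mp hd).1
  have hfib : ∑ m ∈ univ.filter (fun m : ZMod k => k / Nat.gcd m.val k = d),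
        EE k (m * (-(b : ZMod k))) * (hz k (k / Nat.gcd m.val k) t) ^ s
      = (∑ m ∈ univ.filter (fun m : ZMod k => k / Nat.gcd m.val k = d),
          EE k (m * (-(b : ZMod k)))) * (hz k d t) ^ s := by
    rw [Finset.sum_mul]
    refine Finset.sum_congr rfl (fun m hm => ?_)
    rw [(Finset.mem_filter.mp hm).2]
  rw [hfib, fiber_ram b d hdk, ramc]
end EEk
end

section
/- The Dirichlet series of the Ramanujan sums satisfies Σ_{k≥1} c(n,k)/k^s = σ_{1−s}(n)/ζ(s) for Re(s) > 1, where σ_p(n) = Σ_{d|n} d^p. -/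
open Finset

open Complex ArithmeticFunction LSeries
open scoped LSeries.notation
open scoped ArithmeticFunction.Moebius

lemma sum_exp_aux (K n : ℕ) (hK : 0 < K) :
    ∑ m ∈ Icc 1 K, Complex.exp (2 * Real.pi * Complex.I * m * n / K)
      = if K ∣ n then (K : ℂ) else 0 := by
  have hK0 : (K : ℂ) ≠ 0 := Nat.cast_ne_zero.mpr hK.ne'
  have h2pi : (2 * (Real.pi : ℂ) * Complex.I) ≠ 0 := by
    simp [Real.pi_ne_zero, Complex.I_ne_zero]
  have key : ∀ m : ℕ, Complex.exp (2 * Real.pi * Complex.I * m * n / K)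
      = Complex.exp (2 * Real.pi * Complex.I * n / K) ^ m := by
    intro m
    rw [← Complex.exp_nat_mul]
    ring_nf
  simp_rw [key]
  set z : ℂ := Complex.exp (2 * Real.pi * Complex.I * n / K) with hz
  have hzK : z ^ K = 1 := by
    rw [← Complex.exp_nat_mul, Complex.exp_eq_one_iff]
    exact ⟨n, by field_simp; push_cast; ring⟩
  by_cases hdvd : K ∣ n
  · have hz1 : z = 1 := by
      obtain ⟨t, rfl⟩ := hdvd
      rw [hz, Complex.exp_eq_one_iff]
      exact ⟨t, by field_simp; push_cast; ring⟩
    simp [hz1, hdvd, Nat.card_Icc]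
  · have hz1 : z ≠ 1 := by
      intro h
      rw [hz, Complex.exp_eq_one_iff] at h
      obtain ⟨j, hj⟩ := h
      rw [div_eq_iff hK0] at hj
      have hj' : 2 * (Real.pi : ℂ) * Complex.I * n = 2 * (Real.pi : ℂ) * Complex.I * (j * K) := by
        rw [hj]; ring
      have hn : (n : ℂ) = (j * K : ℤ) := by
        push_cast
        exact mul_left_cancel₀ h2pi hj'
      have hn' : (n : ℤ) = j * K := by exact_mod_cast hn
      exact hdvd (Int.natCast_dvd_natCast.mp ⟨j, by rw [hn']; ring⟩)
    have hIcc : ∑ m ∈ Icc 1 K, z ^ m = z * ∑ m ∈ range K, z ^ m := by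
      have : Icc 1 K = Ico 1 (K + 1) := rfl
      rw [this, Finset.sum_Ico_eq_sum_range, Finset.mul_sum]
      simp [pow_add, pow_succ, mul_comm]
    rw [hIcc, geom_sum_eq hz1, hzK]
    simp [hdvd]

lemma moebius_sum_aux (m : ℕ) :
    ∑ d ∈ m.divisors, (moebius d : ℂ) = if m = 1 then 1 else 0 := by
  have h := congrArg (fun f : ArithmeticFunction ℤ => f m)
    (ArithmeticFunction.coe_moebius_mul_coe_zeta (R := ℤ))
  simp only [ArithmeticFunction.coe_mul_zeta_apply, ArithmeticFunction.one_apply] at h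
  have : ((∑ d ∈ m.divisors, moebius d : ℤ) : ℂ) = ((if m = 1 then 1 else 0 : ℤ) : ℂ) := by
    exact_mod_cast congrArg (fun z : ℤ => (z : ℂ)) h
  push_cast at this
  simpa using this

lemma inner_aux (k d n : ℕ) (hd : d ∣ k) (hk : 0 < k) :
    ∑ m ∈ (Icc 1 k).filter (fun m => d ∣ m),
      Complex.exp (2 * Real.pi * Complex.I * m * n / k)
      = if (k / d) ∣ n then ((k / d : ℕ) : ℂ) else 0 := by
  have hd0 : 0 < d := Nat.pos_of_dvd_of_pos hd hk
  have hkd : 0 < k / d := Nat.div_pos (Nat.le_of_dvd hk hd) hd0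
  rw [← sum_exp_aux (k / d) n hkd]
  refine Finset.sum_nbij' (fun m => m / d) (fun j => d * j) ?_ ?_ ?_ ?_ ?_
  · intro m hm
    simp only [mem_filter, mem_Icc] at hm
    obtain ⟨⟨h1, h2⟩, hdm⟩ := hm
    simp only [mem_Icc]
    constructor
    · exact Nat.one_le_div_iff hd0 |>.mpr (Nat.le_of_dvd h1 hdm)
    · exact Nat.div_le_div_right h2
  · intro j hj
    simp only [mem_Icc] at hj
    simp only [mem_filter, mem_Icc]
    refine ⟨⟨?_, ?_⟩, Dvd.intro j rfl⟩
    · exact Nat.one_le_iff_ne_zero.mpr (Nat.mul_ne_zero hd0.ne' (by omega))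
    · calc d * j ≤ d * (k / d) := Nat.mul_le_mul_left d hj.2
        _ = k := Nat.mul_div_cancel' hd
  · intro m hm
    simp only [mem_filter] at hm
    exact Nat.mul_div_cancel' hm.2
  · intro j hj
    exact Nat.mul_div_cancel_left j hd0
  · intro m hm
    simp only [mem_filter, mem_Icc] at hm
    obtain ⟨⟨h1, h2⟩, hdm⟩ := hm
    obtain ⟨a, rfl⟩ := hdm
    obtain ⟨b, rfl⟩ := hd
    rw [Nat.mul_div_cancel_left a hd0, Nat.mul_div_cancel_left b hd0]
    congr 1
    have hb0 : (b : ℂ) ≠ 0 := by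
      have : 0 < b := Nat.pos_of_mul_pos_left (by rwa [mul_comm] at hk)
      exact_mod_cast this.ne'
    have hd0' : (d : ℂ) ≠ 0 := Nat.cast_ne_zero.mpr hd0.ne'
    push_cast
    field_simp

lemma ramc_eq_s16 (n k : ℕ) (hk : 0 < k) :
    ramc n k = ∑ d ∈ k.divisors,
      (if d ∣ n then (d : ℂ) else 0) * (moebius (k / d) : ℂ) := by
  set e : ℕ → ℂ := fun m => Complex.exp (2 * Real.pi * Complex.I * m * n / k) with he
  have step1 : ramc n k
      = ∑ m ∈ Icc 1 k, (∑ d ∈ k.divisors.filter (· ∣ m), (moebius d : ℂ)) * e m := by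
    rw [ramc, Finset.sum_filter]
    refine Finset.sum_congr rfl fun m hm => ?_
    have hgcd : (Nat.gcd m k).divisors = k.divisors.filter (· ∣ m) := by
      ext d
      simp only [Nat.mem_divisors, mem_filter, Nat.dvd_gcd_iff]
      constructor
      · rintro ⟨⟨h1, h2⟩, h3⟩
        exact ⟨⟨h2, hk.ne'⟩, h1⟩
      · rintro ⟨⟨h1, h2⟩, h3⟩
        exact ⟨⟨h3, h1⟩, Nat.gcd_ne_zero_right hk.ne'⟩
    rw [← hgcd, moebius_sum_aux, ite_mul, one_mul, zero_mul]
  have step2 : ramc n k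
      = ∑ d ∈ k.divisors, (moebius d : ℂ) *
          ∑ m ∈ (Icc 1 k).filter (fun m => d ∣ m), e m := by
    rw [step1]
    simp_rw [Finset.sum_filter, Finset.sum_mul, Finset.mul_sum]
    rw [Finset.sum_comm]
    refine Finset.sum_congr rfl fun d _ => Finset.sum_congr rfl fun m _ => ?_
    by_cases h : d ∣ m <;> simp [h]
  rw [step2]
  have step3 : ∑ d ∈ k.divisors, (moebius d : ℂ) *
          ∑ m ∈ (Icc 1 k).filter (fun m => d ∣ m), e m
      = ∑ d ∈ k.divisors, (moebius d : ℂ) * (if (k / d) ∣ n then ((k / d : ℕ) : ℂ) else 0) := by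
    refine Finset.sum_congr rfl fun d hd => ?_
    rw [inner_aux k d n (Nat.mem_divisors.mp hd).1 hk]
  rw [step3]
  have step4 : ∑ d ∈ k.divisors,
      (if d ∣ n then (d : ℂ) else 0) * (moebius (k / d) : ℂ)
      = ∑ d ∈ k.divisors,
        (fun d => (if d ∣ n then (d : ℂ) else 0) * (moebius (k / d) : ℂ)) d := rfl
  rw [step4, ← Nat.sum_div_divisors k
    (fun d => (if d ∣ n then (d : ℂ) else 0) * (moebius (k / d) : ℂ))]
  refine Finset.sum_congr rfl fun d hd => ?_
  obtain ⟨hdk, -⟩ := Nat.mem_divisors.mp hd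
  rw [Nat.div_div_self hdk hk.ne']
  ring

/-- `Σ_{k≥1} c(n,k)/k^s = σ_{1-s}(n)/ζ(s)` for `Re(s) > 1`. -/
theorem stmt16 (n : ℕ) (hn : 0 < n) (s : ℂ) (hs : 1 < s.re) :
    ∑' k : ℕ, ramc n (k + 1) / ((k : ℂ) + 1) ^ s
      = (∑ d ∈ n.divisors, (d : ℂ) ^ ((1 : ℂ) - s)) / riemannZeta s := by
  set f : ℕ → ℂ := fun d => if d ∣ n then (d : ℂ) else 0 with hf
  have hterm0 : ∀ i ∉ n.divisors, LSeries.term f s i = 0 := by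
    intro i hi
    rcases eq_or_ne i 0 with rfl | hi0
    · simp [LSeries.term]
    · have : ¬ i ∣ n := fun h => hi (Nat.mem_divisors.mpr ⟨h, hn.ne'⟩)
      simp [LSeries.term, hi0, hf, this]
  have h1 : LSeriesSummable f s :=
    summable_of_ne_finset_zero hterm0
  have h2 : LSeriesSummable ↗μ s := LSeriesSummable_moebius_iff.mpr hs
  have hconv : ∀ k : ℕ, 0 < k → (f ⍟ ↗μ) k = ramc n k := by
    intro k hk
    rw [LSeries.convolution_def]
    beta_reduce
    rw [Nat.sum_divisorsAntidiagonal (fun a b => f a * (moebius b : ℂ)), ramc_eq_s16 n k hk]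
  have hsum : LSeriesSummable (f ⍟ ↗μ) s := h1.convolution h2
  have hLHS : ∑' k : ℕ, ramc n (k + 1) / ((k : ℂ) + 1) ^ s = LSeries (f ⍟ ↗μ) s := by
    rw [LSeries, Summable.tsum_eq_zero_add hsum]
    simp only [LSeries.term, Nat.succ_ne_zero, if_false, if_pos rfl, if_true, zero_add]
    refine tsum_congr fun k => ?_
    rw [hconv (k + 1) k.succ_pos]
    push_cast
    ring_nf
  have hLf : LSeries f s = ∑ d ∈ n.divisors, (d : ℂ) ^ ((1 : ℂ) - s) := by
    rw [LSeries, tsum_eq_sum hterm0]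
    refine Finset.sum_congr rfl fun d hd => ?_
    obtain ⟨hdn, -⟩ := Nat.mem_divisors.mp hd
    have hd0 : d ≠ 0 := by
      rintro rfl
      exact hn.ne' (Nat.eq_zero_of_zero_dvd hdn)
    have hd0' : (d : ℂ) ≠ 0 := Nat.cast_ne_zero.mpr hd0
    rw [LSeries.term, if_neg hd0, hf]
    simp only [hdn, if_pos]
    rw [Complex.cpow_sub _ _ hd0', Complex.cpow_one]
  have hζ : riemannZeta s ≠ 0 := riemannZeta_ne_zero_of_one_lt_re hs
  have hμζ : riemannZeta s * LSeries ↗μ s = 1 := by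
    rw [← LSeries_one_eq_riemannZeta hs]
    exact LSeries_one_mul_Lseries_moebius hs
  have hμval : LSeries ↗μ s = (riemannZeta s)⁻¹ := by
    field_simp at hμζ ⊢
    linear_combination hμζ
  rw [hLHS, LSeries_convolution' h1 h2, hLf, hμval, div_eq_mul_inv]
end
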